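/- arXiv:2003.00816 — 11 statements merged into one kernel-verified Lean document; each statement's English description precedes it below -/
import Mathlib

section
/- For the diffusion iterates: if the step-size satisfies 0 < α ≤ 2/(μ + L), then for every time k ∈ ℕ, √n·‖x̄^{k+1} − x̃^{(k+1)*}‖ ≤ (1 − αμ/2)·√n·‖x̄^k − x̃^{k*}‖ + αL·(Σ_{i=1}^n ‖x_i^k − x̄^k‖²)^{1/2} + (1 − αμ/2)·√n·Δ_x. -/
open Finset Filter RealInnerProductSpace

set_option linter.unusedVariables false
set_option linter.unusedSectionVars false

section aux
variable {E : Type*} [NormedAddCommGroup E] [InnerProductSpace ℝ E] [CompleteSpace E]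

lemma line_hasDerivAt (F : E → ℝ) (h : E → E) (hF : ∀ z, HasGradientAt F (h z) z)
    (x v : E) (t : ℝ) :
    HasDerivAt (fun s : ℝ => F (x + s • v)) ⟪h (x + t • v), v⟫ t := by
  have hc : HasDerivAt (fun s : ℝ => x + s • v) v t := by
    simpa using ((hasDerivAt_id t).smul_const v).const_add x
  have := ((hF (x + t • v)).hasFDerivAt).comp_hasDerivAt t hc
  exact this

/-- if u has nonneg derivative on (0,1) then u 0 ≤ u 1 -/
lemma mono_aux (u u' : ℝ → ℝ) (hu : ∀ t, HasDerivAt u (u' t) t)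
    (hnn : ∀ t ∈ Set.Ioo (0:ℝ) 1, 0 ≤ u' t) : u 0 ≤ u 1 := by
  have hmono : MonotoneOn u (Set.Icc 0 1) := by
    apply monotoneOn_of_deriv_nonneg (convex_Icc 0 1)
    · exact fun t _ => ((hu t).differentiableAt).continuousAt.continuousWithinAt
    · intro t ht
      rw [interior_Icc] at ht
      exact ((hu t).differentiableAt).differentiableWithinAt
    · intro t ht
      rw [interior_Icc] at ht
      rw [(hu t).deriv]
      exact hnn t ht
  exact hmono (by norm_num) (by norm_num) (by norm_num)

lemma descent_lemma (F : E → ℝ) (h : E → E) (L : ℝ) (hL : 0 ≤ L)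
    (hF : ∀ z, HasGradientAt F (h z) z)
    (hLip : ∀ a b, ‖h a - h b‖ ≤ L * ‖a - b‖) (x y : E) :
    F y ≤ F x + ⟪h x, y - x⟫ + L / 2 * ‖y - x‖ ^ 2 := by
  set v := y - x with hv
  set u : ℝ → ℝ := fun t => F x + t * ⟪h x, v⟫ + L / 2 * t ^ 2 * ‖v‖ ^ 2 - F (x + t • v)
    with hu
  have hder : ∀ t : ℝ, HasDerivAt u
      (⟪h x, v⟫ + L / 2 * (2 * t) * ‖v‖ ^ 2 - ⟪h (x + t • v), v⟫) t := by
    intro t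
    have h1 : HasDerivAt (fun t : ℝ => F x + t * ⟪h x, v⟫ + L / 2 * t ^ 2 * ‖v‖ ^ 2)
        (⟪h x, v⟫ + L / 2 * (2 * t) * ‖v‖ ^ 2) t := by
      have ha : HasDerivAt (fun t : ℝ => t * ⟪h x, v⟫) ⟪h x, v⟫ t := by
        simpa using (hasDerivAt_id t).mul_const ⟪h x, v⟫
      have hb : HasDerivAt (fun t : ℝ => L / 2 * t ^ 2 * ‖v‖ ^ 2) (L / 2 * (2 * t) * ‖v‖ ^ 2) t := by
        have := ((hasDerivAt_pow 2 t).const_mul (L / 2)).mul_const (‖v‖ ^ 2)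
        simpa [mul_comm, mul_assoc, mul_left_comm] using this
      exact ((ha.const_add (F x)).add hb)
    exact h1.sub (line_hasDerivAt F h hF x v t)
  have key : u 0 ≤ u 1 := by
    apply mono_aux u _ hder
    intro t ht
    have h2 : ⟪h x - h (x + t • v), v⟫ ≥ -(L * t * ‖v‖ ^ 2) := by
      have := abs_real_inner_le_norm (h x - h (x + t • v)) v
      have h3 : ‖h x - h (x + t • v)‖ ≤ L * (t * ‖v‖) := by
        have := hLip x (x + t • v)
        simpa [norm_smul, abs_of_pos ht.1] using this
      nlinarith [neg_abs_le ⟪h x - h (x + t • v), v⟫, norm_nonneg v,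
        norm_nonneg (h x - h (x + t • v)), ht.1.le]
    have hexp : ⟪h x, v⟫ - ⟪h (x + t • v), v⟫ = ⟪h x - h (x + t • v), v⟫ := by
      rw [inner_sub_left]
    nlinarith [h2]
  have h0 : u 0 = 0 := by simp [hu]
  have h1 : u 1 = F x + ⟪h x, v⟫ + L / 2 * ‖v‖ ^ 2 - F y := by
    simp [hu, hv]
  rw [h0, h1] at key
  linarith

lemma lower_lemma (F : E → ℝ) (h : E → E) (μ : ℝ) (hμ : 0 ≤ μ)
    (hF : ∀ z, HasGradientAt F (h z) z)
    (hsc : ∀ a b, ⟪h a - h b, a - b⟫ ≥ μ * ‖a - b‖ ^ 2) (x y : E) :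
    F x + ⟪h x, y - x⟫ + μ / 2 * ‖y - x‖ ^ 2 ≤ F y := by
  set v := y - x with hv
  set u : ℝ → ℝ := fun t => F (x + t • v) - (F x + t * ⟪h x, v⟫ + μ / 2 * t ^ 2 * ‖v‖ ^ 2)
    with hu
  have hder : ∀ t : ℝ, HasDerivAt u
      (⟪h (x + t • v), v⟫ - (⟪h x, v⟫ + μ / 2 * (2 * t) * ‖v‖ ^ 2)) t := by
    intro t
    have h1 : HasDerivAt (fun t : ℝ => F x + t * ⟪h x, v⟫ + μ / 2 * t ^ 2 * ‖v‖ ^ 2)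
        (⟪h x, v⟫ + μ / 2 * (2 * t) * ‖v‖ ^ 2) t := by
      have ha : HasDerivAt (fun t : ℝ => t * ⟪h x, v⟫) ⟪h x, v⟫ t := by
        simpa using (hasDerivAt_id t).mul_const ⟪h x, v⟫
      have hb : HasDerivAt (fun t : ℝ => μ / 2 * t ^ 2 * ‖v‖ ^ 2) (μ / 2 * (2 * t) * ‖v‖ ^ 2) t := by
        have := ((hasDerivAt_pow 2 t).const_mul (μ / 2)).mul_const (‖v‖ ^ 2)
        simpa [mul_comm, mul_assoc, mul_left_comm] using this
      exact ((ha.const_add (F x)).add hb)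
    exact (line_hasDerivAt F h hF x v t).sub h1
  have key : u 0 ≤ u 1 := by
    apply mono_aux u _ hder
    intro t ht
    have h2 := hsc (x + t • v) x
    have h3 : (x + t • v) - x = t • v := by abel
    rw [h3] at h2
    have h4 : ⟪h (x + t • v) - h x, t • v⟫ = t * ⟪h (x + t • v) - h x, v⟫ := by
      rw [real_inner_smul_right]
    have h5 : ‖t • v‖ ^ 2 = t ^ 2 * ‖v‖ ^ 2 := by
      rw [norm_smul, Real.norm_eq_abs, mul_pow, sq_abs]
    rw [h4, h5] at h2
    have ht0 : 0 < t := ht.1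
    have h6 : μ * t * ‖v‖ ^ 2 ≤ ⟪h (x + t • v) - h x, v⟫ := by
      have := (mul_le_mul_iff_right₀ ht0).mp (by nlinarith : t * (μ * t * ‖v‖ ^ 2) ≤ t * ⟪h (x + t • v) - h x, v⟫)
      exact this
    have hexp : ⟪h (x + t • v), v⟫ - ⟪h x, v⟫ = ⟪h (x + t • v) - h x, v⟫ := by
      rw [inner_sub_left]
    nlinarith [h6]
  have h0 : u 0 = 0 := by simp [hu]
  have h1 : u 1 = F y - (F x + ⟪h x, v⟫ + μ / 2 * ‖v‖ ^ 2) := by simp [hu, hv]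
  rw [h0, h1] at key
  linarith

lemma bh_lemma (F : E → ℝ) (h : E → E) (L : ℝ) (hL : 0 < L)
    (upper : ∀ x y : E, F y ≤ F x + ⟪h x, y - x⟫ + L / 2 * ‖y - x‖ ^ 2)
    (lower : ∀ x y : E, F x + ⟪h x, y - x⟫ ≤ F y) (x y : E) :
    (1 / L) * ‖h x - h y‖ ^ 2 ≤ ⟪h x - h y, x - y⟫ := by
  have key : ∀ a b : E, 1 / (2 * L) * ‖h b - h a‖ ^ 2 ≤ F b - F a - ⟪h a, b - a⟫ := by
    intro a b
    set w := h b - h a with hw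
    set z := b - L⁻¹ • w with hz
    have h1 := lower a z
    have h2 := upper b z
    have hzb : z - b = -(L⁻¹ • w) := by rw [hz]; abel
    have hza : z - a = (b - a) - L⁻¹ • w := by rw [hz]; abel
    have e1 : ⟪h a, z - a⟫ = ⟪h a, b - a⟫ - L⁻¹ * ⟪h a, w⟫ := by
      rw [hza, inner_sub_right, real_inner_smul_right]
    have e2 : ⟪h b, z - b⟫ = -(L⁻¹ * ⟪h b, w⟫) := by
      rw [hzb, inner_neg_right, real_inner_smul_right]
    have e3 : ‖z - b‖ ^ 2 = L⁻¹ ^ 2 * ‖w‖ ^ 2 := by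
      rw [hzb, norm_neg, norm_smul, Real.norm_eq_abs, mul_pow, sq_abs]
    rw [e1] at h1
    rw [e2, e3] at h2
    have e4 : ⟪h b, w⟫ - ⟪h a, w⟫ = ‖w‖ ^ 2 := by
      rw [← inner_sub_left, ← hw, real_inner_self_eq_norm_sq]
    have hL' : L ≠ 0 := ne_of_gt hL
    have : F a + ⟪h a, b - a⟫ - L⁻¹ * ⟪h a, w⟫ ≤
        F b - L⁻¹ * ⟪h b, w⟫ + L / 2 * (L⁻¹ ^ 2 * ‖w‖ ^ 2) := by linarith
    have hfe : L / 2 * (L⁻¹ ^ 2 * ‖w‖ ^ 2) = 1 / (2 * L) * ‖w‖ ^ 2 := by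
      field_simp
    rw [hfe] at this
    have : L⁻¹ * (⟪h b, w⟫ - ⟪h a, w⟫) - 1 / (2 * L) * ‖w‖ ^ 2 ≤ F b - F a - ⟪h a, b - a⟫ := by
      linarith
    rw [e4] at this
    have : L⁻¹ * ‖w‖ ^ 2 - 1 / (2 * L) * ‖w‖ ^ 2 = 1 / (2 * L) * ‖w‖ ^ 2 := by field_simp; ring
    linarith [this]
  have k1 := key x y
  have k2 := key y x
  have e5 : ⟪h y, x - y⟫ = -⟪h y, y - x⟫ := by rw [← inner_neg_right]; congr 1; abel
  have e6 : ‖h x - h y‖ = ‖h y - h x‖ := norm_sub_rev _ _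
  have e7 : ⟪h x - h y, x - y⟫ = ⟪h x, x - y⟫ - ⟪h y, x - y⟫ := by rw [inner_sub_left]
  have e8 : ⟪h x, x - y⟫ = -⟪h x, y - x⟫ := by rw [← inner_neg_right]; congr 1; abel
  have hfin : 1 / (2 * L) * ‖h x - h y‖ ^ 2 + 1 / (2 * L) * ‖h x - h y‖ ^ 2
      = 1 / L * ‖h x - h y‖ ^ 2 := by field_simp; ring
  rw [← e6] at k1
  rw [e5] at k2
  rw [e7, e8, e5]
  linarith [k1, k2, hfin]

lemma strong_coco (F : E → ℝ) (h : E → E) (μ L : ℝ) (hμ : 0 < μ) (hμL : μ ≤ L)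
    (upper : ∀ x y : E, F y ≤ F x + ⟪h x, y - x⟫ + L / 2 * ‖y - x‖ ^ 2)
    (lower : ∀ x y : E, F x + ⟪h x, y - x⟫ + μ / 2 * ‖y - x‖ ^ 2 ≤ F y)
    (hsm : ∀ a b : E, ‖h a - h b‖ ≤ L * ‖a - b‖) (x y : E) :
    μ * L / (μ + L) * ‖x - y‖ ^ 2 + 1 / (μ + L) * ‖h x - h y‖ ^ 2 ≤ ⟪h x - h y, x - y⟫ := by
  have hsc : ∀ a b : E, μ * ‖a - b‖ ^ 2 ≤ ⟪h a - h b, a - b⟫ := by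
    intro a b
    have l1 := lower a b
    have l2 := lower b a
    have e1 : ⟪h b, a - b⟫ = -⟪h b, b - a⟫ := by rw [← inner_neg_right]; congr 1; abel
    have e2 : ‖a - b‖ = ‖b - a‖ := norm_sub_rev _ _
    have e3 : ⟪h a - h b, a - b⟫ = ⟪h a, a - b⟫ - ⟪h b, a - b⟫ := by rw [inner_sub_left]
    have e4 : ⟪h a, a - b⟫ = -⟪h a, b - a⟫ := by rw [← inner_neg_right]; congr 1; abel
    have e2' : ‖a - b‖ ^ 2 = ‖b - a‖ ^ 2 := by rw [e2]
    rw [e1, e2'] at l2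
    rw [e2', e3, e4, e1]
    linarith [l1, l2]
  rcases eq_or_lt_of_le hμL with heq | hlt
  · -- μ = L
    subst heq
    have h1 := hsc x y
    have h2 := hsm x y
    have hn : ‖h x - h y‖ ^ 2 ≤ μ ^ 2 * ‖x - y‖ ^ 2 := by
      nlinarith [norm_nonneg (h x - h y), norm_nonneg (x - y)]
    have hA : μ * μ / (μ + μ) = μ / 2 := by field_simp; ring
    have hB : 1 / (μ + μ) * ‖h x - h y‖ ^ 2 ≤ μ / 2 * ‖x - y‖ ^ 2 := by
      have h1' : 1 / (μ + μ) * ‖h x - h y‖ ^ 2 ≤ 1 / (μ + μ) * (μ ^ 2 * ‖x - y‖ ^ 2) :=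
        mul_le_mul_of_nonneg_left hn (by positivity)
      have heq2 : 1 / (μ + μ) * (μ ^ 2 * ‖x - y‖ ^ 2) = μ / 2 * ‖x - y‖ ^ 2 := by
        field_simp; ring
      linarith
    rw [hA]
    linarith [h1]
  · -- μ < L : apply bh to Φ = F - μ/2 ‖·‖², hΦ = h - μ • id, constant L - μ
    set Φ : E → ℝ := fun z => F z - μ / 2 * ‖z‖ ^ 2 with hΦdef
    set hΦ : E → E := fun z => h z - μ • z with hhΦ
    have hexp : ∀ a b : E, ‖b‖ ^ 2 = ‖a‖ ^ 2 + 2 * ⟪a, b - a⟫ + ‖b - a‖ ^ 2 := by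
      intro a b
      have hab : a + (b - a) = b := by abel
      calc ‖b‖ ^ 2 = ‖a + (b - a)‖ ^ 2 := by rw [hab]
        _ = ‖a‖ ^ 2 + 2 * ⟪a, b - a⟫ + ‖b - a‖ ^ 2 := norm_add_sq_real a (b - a)
    have hinner : ∀ a b : E, ⟪hΦ a, b - a⟫ = ⟪h a, b - a⟫ - μ * ⟪a, b - a⟫ := by
      intro a b
      rw [hhΦ]; simp [inner_sub_left, real_inner_smul_left]
    have upperΦ : ∀ a b : E, Φ b ≤ Φ a + ⟪hΦ a, b - a⟫ + (L - μ) / 2 * ‖b - a‖ ^ 2 := by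
      intro a b
      have := upper a b
      have he := hexp a b
      rw [hΦdef]
      simp only
      rw [hinner a b]
      nlinarith [this, he]
    have lowerΦ : ∀ a b : E, Φ a + ⟪hΦ a, b - a⟫ ≤ Φ b := by
      intro a b
      have := lower a b
      have he := hexp a b
      rw [hΦdef]
      simp only
      rw [hinner a b]
      nlinarith [this, he]
    have hLμ : 0 < L - μ := by linarith
    have key := bh_lemma Φ hΦ (L - μ) hLμ upperΦ lowerΦ x y
    have e1 : hΦ x - hΦ y = (h x - h y) - μ • (x - y) := by
      simp only [hhΦ, smul_sub]; abel
    rw [e1] at key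
    have e2 : ‖(h x - h y) - μ • (x - y)‖ ^ 2
        = ‖h x - h y‖ ^ 2 - 2 * μ * ⟪h x - h y, x - y⟫ + μ ^ 2 * ‖x - y‖ ^ 2 := by
      rw [norm_sub_sq_real, real_inner_smul_right, norm_smul, Real.norm_eq_abs, mul_pow,
        sq_abs]
      ring
    have e3 : ⟪(h x - h y) - μ • (x - y), x - y⟫
        = ⟪h x - h y, x - y⟫ - μ * ‖x - y‖ ^ 2 := by
      rw [inner_sub_left, real_inner_smul_left, real_inner_self_eq_norm_sq]
    rw [e2, e3] at key
    have hμL0 : 0 < μ + L := by linarith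
    have key2 : ‖h x - h y‖ ^ 2 - 2 * μ * ⟪h x - h y, x - y⟫ + μ ^ 2 * ‖x - y‖ ^ 2
        ≤ (L - μ) * (⟪h x - h y, x - y⟫ - μ * ‖x - y‖ ^ 2) := by
      have := mul_le_mul_of_nonneg_left key (le_of_lt hLμ)
      rw [mul_comm (L - μ) (1 / (L - μ) * _)] at this
      calc ‖h x - h y‖ ^ 2 - 2 * μ * ⟪h x - h y, x - y⟫ + μ ^ 2 * ‖x - y‖ ^ 2
          = 1 / (L - μ) * (‖h x - h y‖ ^ 2 - 2 * μ * ⟪h x - h y, x - y⟫ + μ ^ 2 * ‖x - y‖ ^ 2) * (L - μ) := by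
            field_simp
        _ ≤ (⟪h x - h y, x - y⟫ - μ * ‖x - y‖ ^ 2) * (L - μ) := by
            apply mul_le_mul_of_nonneg_right key (le_of_lt hLμ)
        _ = (L - μ) * (⟪h x - h y, x - y⟫ - μ * ‖x - y‖ ^ 2) := by ring
    -- (L+μ)⟪Δh,Δ⟫ ≥ ‖Δh‖² + μL‖Δ‖²
    have key3 : ‖h x - h y‖ ^ 2 + μ * L * ‖x - y‖ ^ 2 ≤ (μ + L) * ⟪h x - h y, x - y⟫ := by
      nlinarith [key2]
    rw [div_mul_eq_mul_div, div_mul_eq_mul_div, ← add_div, div_le_iff₀ hμL0]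
    nlinarith [key3]

lemma contract_lemma (h : E → E) (μ L α : ℝ) (hμ : 0 < μ) (hμL : μ ≤ L)
    (hα0 : 0 < α) (hα : α ≤ 2 / (μ + L))
    (coco : ∀ x y : E, μ * L / (μ + L) * ‖x - y‖ ^ 2 + 1 / (μ + L) * ‖h x - h y‖ ^ 2
      ≤ ⟪h x - h y, x - y⟫) (x y : E) :
    ‖(x - α • h x) - (y - α • h y)‖ ≤ (1 - α * μ / 2) * ‖x - y‖ := by
  have hμL0 : (0:ℝ) < μ + L := by linarith
  have hαμ : α * μ ≤ 1 := by
    have : α * (μ + L) ≤ 2 := by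
      rw [div_eq_mul_inv] at hα
      calc α * (μ + L) ≤ (2 * (μ + L)⁻¹) * (μ + L) := by
            apply mul_le_mul_of_nonneg_right hα (le_of_lt hμL0)
        _ = 2 := by field_simp
    nlinarith
  have hfac : (0:ℝ) ≤ 1 - α * μ / 2 := by linarith
  have hveq : (x - α • h x) - (y - α • h y) = (x - y) - α • (h x - h y) := by
    rw [smul_sub]; abel
  rw [hveq]
  have hsq : ‖(x - y) - α • (h x - h y)‖ ^ 2 ≤ ((1 - α * μ / 2) * ‖x - y‖) ^ 2 := by
    rw [norm_sub_sq_real, real_inner_smul_right, norm_smul, Real.norm_eq_abs, mul_pow, sq_abs,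
      real_inner_comm]
    have hc := coco x y
    have hαc : α * (α - 2 / (μ + L)) ≤ 0 :=
      mul_nonpos_of_nonneg_of_nonpos (le_of_lt hα0) (by linarith)
    have hL1 : μ ≤ 2 * (μ * L) / (μ + L) := by
      rw [le_div_iff₀ hμL0]; nlinarith
    -- ‖Δ - αΔh‖² ≤ (1 - 2α μL/(μ+L))‖Δ‖² + α(α - 2/(μ+L))‖Δh‖² ≤ (1-αμ)‖Δ‖² ≤ (1-αμ/2)²‖Δ‖²
    have step1 : ‖x - y‖ ^ 2 - 2 * (α * ⟪h x - h y, x - y⟫) + α ^ 2 * ‖h x - h y‖ ^ 2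
        ≤ (1 - α * (2 * (μ * L) / (μ + L))) * ‖x - y‖ ^ 2
          + α * (α - 2 / (μ + L)) * ‖h x - h y‖ ^ 2 := by
      have h2 := mul_le_mul_of_nonneg_left hc (le_of_lt hα0)
      have hexpand : α * (μ * L / (μ + L) * ‖x - y‖ ^ 2 + 1 / (μ + L) * ‖h x - h y‖ ^ 2)
          = α * (μ * L / (μ + L)) * ‖x - y‖ ^ 2 + α * (1 / (μ + L)) * ‖h x - h y‖ ^ 2 := by
        ring
      rw [hexpand] at h2
      have e1 : (1 - α * (2 * (μ * L) / (μ + L))) * ‖x - y‖ ^ 2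
          = ‖x - y‖ ^ 2 - 2 * (α * (μ * L / (μ + L)) * ‖x - y‖ ^ 2) := by ring
      have e2 : α * (α - 2 / (μ + L)) * ‖h x - h y‖ ^ 2
          = α ^ 2 * ‖h x - h y‖ ^ 2 - 2 * (α * (1 / (μ + L)) * ‖h x - h y‖ ^ 2) := by ring
      rw [e1, e2]
      linarith
    have step2 : (1 - α * (2 * (μ * L) / (μ + L))) * ‖x - y‖ ^ 2
        ≤ (1 - α * μ) * ‖x - y‖ ^ 2 := by
      apply mul_le_mul_of_nonneg_right _ (sq_nonneg _)
      have := mul_le_mul_of_nonneg_left hL1 (le_of_lt hα0)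
      linarith
    have step3 : (1 - α * μ) * ‖x - y‖ ^ 2 ≤ ((1 - α * μ / 2) * ‖x - y‖) ^ 2 := by
      have : (1 - α * μ) ≤ (1 - α * μ / 2) ^ 2 := by nlinarith [sq_nonneg (α * μ)]
      calc (1 - α * μ) * ‖x - y‖ ^ 2 ≤ (1 - α * μ / 2) ^ 2 * ‖x - y‖ ^ 2 :=
            mul_le_mul_of_nonneg_right this (sq_nonneg _)
        _ = ((1 - α * μ / 2) * ‖x - y‖) ^ 2 := by ring
    nlinarith [step1, step2, step3, mul_nonpos_of_nonpos_of_nonneg hαc (sq_nonneg ‖h x - h y‖)]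
  have hnn : (0:ℝ) ≤ (1 - α * μ / 2) * ‖x - y‖ := mul_nonneg hfac (norm_nonneg _)
  nlinarith [norm_nonneg ((x - y) - α • (h x - h y)), hsq]

lemma avg_gradient {ι : Type*} [Fintype ι] (F : ι → E → ℝ) (G : ι → E → E)
    (hFG : ∀ i z, HasGradientAt (F i) (G i z) z) (c : ℝ) (z : E) :
    HasGradientAt (fun w => c * ∑ i, F i w) (c • ∑ i, G i z) z := by
  rw [hasGradientAt_iff_hasFDerivAt]
  have hsum : HasFDerivAt (fun w => ∑ i, F i w)
      (∑ i, (InnerProductSpace.toDual ℝ E) (G i z)) z := by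
    apply HasFDerivAt.fun_sum
    intro i _
    exact (hFG i z).hasFDerivAt
  have := hsum.const_mul c
  rw [map_smul, map_sum]
  exact this
end aux


theorem diffusion_average_descent
    (n d : ℕ) (hn : 1 ≤ n) (hd : 1 ≤ d)
    (μ L : ℝ) (hμ : 0 < μ) (hμL : μ ≤ L)
    (f : ℕ → Fin n → EuclideanSpace ℝ (Fin d) → ℝ)
    (g : ℕ → Fin n → EuclideanSpace ℝ (Fin d) → EuclideanSpace ℝ (Fin d))
    (hgrad : ∀ k i x, HasGradientAt (f k i) (g k i x) x)
    (hsc : ∀ k i x y, (inner ℝ (g k i x - g k i y) (x - y) : ℝ) ≥ μ * ‖x - y‖ ^ 2)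
    (hsm : ∀ k i x y, ‖g k i x - g k i y‖ ≤ L * ‖x - y‖)
    (xstar : ℕ → EuclideanSpace ℝ (Fin d))
    (hopt : ∀ k, ∑ i, g k i (xstar k) = 0)
    (Δx : ℝ) (hΔx : 0 < Δx)
    (hdrift : ∀ k, ‖xstar (k + 1) - xstar k‖ ≤ Δx)
    (W : Fin n → Fin n → ℝ)
    (hWnonneg : ∀ i j, 0 ≤ W i j)
    (hWrow : ∀ i, ∑ j, W i j = 1)
    (hWcol : ∀ j, ∑ i, W i j = 1)
    (α : ℝ) (hα0 : 0 < α) (hα : α ≤ 2 / (μ + L))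
    (x : ℕ → Fin n → EuclideanSpace ℝ (Fin d))
    (hx : ∀ k i, x (k + 1) i = ∑ j, W i j • (x k j - α • g (k + 1) j (x k j)))
    (xbar : ℕ → EuclideanSpace ℝ (Fin d))
    (hxbar : ∀ k, xbar k = (n : ℝ)⁻¹ • ∑ i, x k i)
    (k : ℕ) :
    Real.sqrt n * ‖xbar (k + 1) - xstar (k + 1)‖ ≤
      (1 - α * μ / 2) * (Real.sqrt n * ‖xbar k - xstar k‖)
      + α * L * Real.sqrt (∑ i, ‖x k i - xbar k‖ ^ 2)
      + (1 - α * μ / 2) * (Real.sqrt n * Δx) := by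
  have hn0 : (0:ℝ) < n := by exact_mod_cast hn
  have hL0 : (0:ℝ) < L := lt_of_lt_of_le hμ hμL
  -- the averaged objective and gradient at time k+1
  set F : EuclideanSpace ℝ (Fin d) → ℝ := fun z => (n:ℝ)⁻¹ * ∑ j, f (k+1) j z with hFdef
  set h : EuclideanSpace ℝ (Fin d) → EuclideanSpace ℝ (Fin d) := fun z => (n:ℝ)⁻¹ • ∑ j, g (k+1) j z with hhdef
  have hF : ∀ z, HasGradientAt F (h z) z := fun z =>
    avg_gradient (f (k+1)) (g (k+1)) (fun i z => hgrad (k+1) i z) ((n:ℝ)⁻¹) z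
  have hdiff : ∀ a b : EuclideanSpace ℝ (Fin d), h a - h b = (n:ℝ)⁻¹ • ∑ j, (g (k+1) j a - g (k+1) j b) := by
    intro a b
    rw [hhdef]
    simp only
    rw [← smul_sub, ← Finset.sum_sub_distrib]
  have hsmh : ∀ a b : EuclideanSpace ℝ (Fin d), ‖h a - h b‖ ≤ L * ‖a - b‖ := by
    intro a b
    rw [hdiff, norm_smul, Real.norm_eq_abs, abs_of_pos (by positivity)]
    calc (n:ℝ)⁻¹ * ‖∑ j, (g (k+1) j a - g (k+1) j b)‖
        ≤ (n:ℝ)⁻¹ * ∑ j, ‖g (k+1) j a - g (k+1) j b‖ :=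
          mul_le_mul_of_nonneg_left (norm_sum_le _ _) (by positivity)
      _ ≤ (n:ℝ)⁻¹ * ∑ _j : Fin n, L * ‖a - b‖ :=
          mul_le_mul_of_nonneg_left
            (Finset.sum_le_sum fun j _ => hsm (k+1) j a b) (by positivity)
      _ = L * ‖a - b‖ := by
          rw [Finset.sum_const, Finset.card_univ, Fintype.card_fin, nsmul_eq_mul]
          field_simp
  have hsch : ∀ a b : EuclideanSpace ℝ (Fin d), ⟪h a - h b, a - b⟫ ≥ μ * ‖a - b‖ ^ 2 := by
    intro a b
    rw [hdiff, real_inner_smul_left, sum_inner]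
    have hs : ∑ j : Fin n, μ * ‖a - b‖ ^ 2 ≤ ∑ j, ⟪g (k+1) j a - g (k+1) j b, a - b⟫ :=
      Finset.sum_le_sum fun j _ => hsc (k+1) j a b
    rw [Finset.sum_const, Finset.card_univ, Fintype.card_fin, nsmul_eq_mul] at hs
    have := mul_le_mul_of_nonneg_left hs (le_of_lt (by positivity : (0:ℝ) < (n:ℝ)⁻¹))
    calc μ * ‖a - b‖ ^ 2 = (n:ℝ)⁻¹ * ((n:ℝ) * (μ * ‖a - b‖ ^ 2)) := by field_simp
      _ ≤ (n:ℝ)⁻¹ * ∑ j, ⟪g (k+1) j a - g (k+1) j b, a - b⟫ := this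
  have upper := descent_lemma F h L (le_of_lt hL0) hF hsmh
  have lower := lower_lemma F h μ (le_of_lt hμ) hF hsch
  have coco := strong_coco F h μ L hμ hμL upper lower hsmh
  -- optimality: h at xstar (k+1) is zero
  have hzero : h (xstar (k+1)) = 0 := by
    rw [hhdef]
    simp only
    rw [hopt (k+1), smul_zero]
  -- sum identity for the iterates
  have hsum : ∑ i, x (k+1) i = ∑ j, (x k j - α • g (k+1) j (x k j)) := by
    calc ∑ i, x (k+1) i
        = ∑ i, ∑ j, W i j • (x k j - α • g (k+1) j (x k j)) := by
          exact Finset.sum_congr rfl fun i _ => hx k i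
      _ = ∑ j, ∑ i, W i j • (x k j - α • g (k+1) j (x k j)) := Finset.sum_comm
      _ = ∑ j, (∑ i, W i j) • (x k j - α • g (k+1) j (x k j)) := by
          exact Finset.sum_congr rfl fun j _ => (Finset.sum_smul).symm
      _ = ∑ j, (x k j - α • g (k+1) j (x k j)) := by
          exact Finset.sum_congr rfl fun j _ => by rw [hWcol j, one_smul]
  -- p : the average of the gradients at the local iterates
  set p : EuclideanSpace ℝ (Fin d) := (n:ℝ)⁻¹ • ∑ j, g (k+1) j (x k j) with hpdef
  have hbar1 : xbar (k+1) = xbar k - α • p := by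
    rw [hxbar (k+1), hsum, hxbar k, hpdef]
    rw [Finset.sum_sub_distrib, smul_sub]
    congr 1
    rw [← Finset.smul_sum, smul_comm]
  -- decomposition
  have hdecomp : xbar (k+1) - xstar (k+1)
      = ((xbar k - α • h (xbar k)) - (xstar (k+1) - α • h (xstar (k+1)))) - α • (p - h (xbar k)) := by
    rw [hbar1, hzero, smul_zero, smul_sub]
    abel
  -- bound the perturbation
  set S := Real.sqrt (∑ i, ‖x k i - xbar k‖ ^ 2) with hSdef
  have hS0 : 0 ≤ S := Real.sqrt_nonneg _
  have hCS : ∑ j, ‖x k j - xbar k‖ ≤ Real.sqrt n * S := by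
    have h1 : (∑ j, ‖x k j - xbar k‖) ^ 2 ≤ (n:ℝ) * ∑ j, ‖x k j - xbar k‖ ^ 2 := by
      have := sq_sum_le_card_mul_sum_sq (s := Finset.univ) (f := fun j => ‖x k j - xbar k‖)
      simpa [Finset.card_univ, Fintype.card_fin] using this
    have h2 : ∑ j, ‖x k j - xbar k‖ = Real.sqrt ((∑ j, ‖x k j - xbar k‖) ^ 2) :=
      (Real.sqrt_sq (Finset.sum_nonneg fun j _ => norm_nonneg _)).symm
    rw [h2]
    calc Real.sqrt ((∑ j, ‖x k j - xbar k‖) ^ 2)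
        ≤ Real.sqrt ((n:ℝ) * ∑ j, ‖x k j - xbar k‖ ^ 2) := Real.sqrt_le_sqrt h1
      _ = Real.sqrt n * S := Real.sqrt_mul (le_of_lt hn0) _
  have hpert : ‖p - h (xbar k)‖ ≤ (n:ℝ)⁻¹ * (L * (Real.sqrt n * S)) := by
    have hph : p - h (xbar k) = (n:ℝ)⁻¹ • ∑ j, (g (k+1) j (x k j) - g (k+1) j (xbar k)) := by
      rw [hpdef, hhdef]
      simp only
      rw [← smul_sub, ← Finset.sum_sub_distrib]
    rw [hph, norm_smul, Real.norm_eq_abs, abs_of_pos (by positivity)]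
    have c1 : ‖∑ j, (g (k+1) j (x k j) - g (k+1) j (xbar k))‖
        ≤ ∑ j, ‖g (k+1) j (x k j) - g (k+1) j (xbar k)‖ := norm_sum_le _ _
    have c2 : ∑ j, ‖g (k+1) j (x k j) - g (k+1) j (xbar k)‖
        ≤ ∑ j, L * ‖x k j - xbar k‖ :=
      Finset.sum_le_sum fun j _ => hsm (k+1) j (x k j) (xbar k)
    have c3 : ∑ j, L * ‖x k j - xbar k‖ = L * ∑ j, ‖x k j - xbar k‖ := by
      rw [Finset.mul_sum]
    have c4 : L * ∑ j, ‖x k j - xbar k‖ ≤ L * (Real.sqrt n * S) :=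
      mul_le_mul_of_nonneg_left hCS (le_of_lt hL0)
    have := le_trans c1 (le_trans c2 (le_of_eq c3 |>.trans c4))
    exact mul_le_mul_of_nonneg_left this (by positivity)
  -- contraction bound
  have hcontr := contract_lemma h μ L α hμ hμL hα0 hα coco (xbar k) (xstar (k+1))
  have hαμ1 : 0 ≤ 1 - α * μ / 2 := by
    have hμL0 : (0:ℝ) < μ + L := by linarith
    have : α * (μ + L) ≤ 2 := by
      rw [div_eq_mul_inv] at hα
      calc α * (μ + L) ≤ (2 * (μ + L)⁻¹) * (μ + L) :=
            mul_le_mul_of_nonneg_right hα (le_of_lt hμL0)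
        _ = 2 := by field_simp
    nlinarith
  have hdrift' : ‖xbar k - xstar (k+1)‖ ≤ ‖xbar k - xstar k‖ + Δx := by
    calc ‖xbar k - xstar (k+1)‖ = ‖(xbar k - xstar k) - (xstar (k+1) - xstar k)‖ := by
          congr 1; abel
      _ ≤ ‖xbar k - xstar k‖ + ‖xstar (k+1) - xstar k‖ := norm_sub_le _ _
      _ ≤ ‖xbar k - xstar k‖ + Δx := by linarith [hdrift k]
  have hmain : ‖xbar (k+1) - xstar (k+1)‖
      ≤ (1 - α * μ / 2) * ‖xbar k - xstar k‖ + (1 - α * μ / 2) * Δx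
        + α * ((n:ℝ)⁻¹ * (L * (Real.sqrt n * S))) := by
    rw [hdecomp]
    calc ‖((xbar k - α • h (xbar k)) - (xstar (k+1) - α • h (xstar (k+1)))) - α • (p - h (xbar k))‖
        ≤ ‖(xbar k - α • h (xbar k)) - (xstar (k+1) - α • h (xstar (k+1)))‖ + ‖α • (p - h (xbar k))‖ :=
          norm_sub_le _ _
      _ ≤ (1 - α * μ / 2) * ‖xbar k - xstar (k+1)‖ + α * ‖p - h (xbar k)‖ := by
          rw [norm_smul, Real.norm_eq_abs, abs_of_pos hα0]
          exact add_le_add hcontr le_rfl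
      _ ≤ (1 - α * μ / 2) * (‖xbar k - xstar k‖ + Δx) + α * ((n:ℝ)⁻¹ * (L * (Real.sqrt n * S))) := by
          apply add_le_add
          · exact mul_le_mul_of_nonneg_left hdrift' hαμ1
          · exact mul_le_mul_of_nonneg_left hpert (le_of_lt hα0)
      _ = (1 - α * μ / 2) * ‖xbar k - xstar k‖ + (1 - α * μ / 2) * Δx
          + α * ((n:ℝ)⁻¹ * (L * (Real.sqrt n * S))) := by ring
  -- multiply by sqrt n
  have hsn : Real.sqrt n * Real.sqrt n = (n:ℝ) := Real.mul_self_sqrt (le_of_lt hn0)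
  have hfin := mul_le_mul_of_nonneg_left hmain (Real.sqrt_nonneg (n:ℝ))
  have hkey : (n:ℝ)⁻¹ * (Real.sqrt n * Real.sqrt n) = 1 := by
    rw [hsn]; exact inv_mul_cancel₀ (ne_of_gt hn0)
  calc Real.sqrt n * ‖xbar (k+1) - xstar (k+1)‖
      ≤ Real.sqrt n * ((1 - α * μ / 2) * ‖xbar k - xstar k‖ + (1 - α * μ / 2) * Δx
          + α * ((n:ℝ)⁻¹ * (L * (Real.sqrt n * S)))) := hfin
    _ = (1 - α * μ / 2) * (Real.sqrt n * ‖xbar k - xstar k‖)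
        + α * L * ((n:ℝ)⁻¹ * (Real.sqrt n * Real.sqrt n)) * S
        + (1 - α * μ / 2) * (Real.sqrt n * Δx) := by ring
    _ = (1 - α * μ / 2) * (Real.sqrt n * ‖xbar k - xstar k‖) + α * L * S
        + (1 - α * μ / 2) * (Real.sqrt n * Δx) := by rw [hkey]; ring
end

section
/- For the diffusion iterates: if the step-size satisfies 0 < α ≤ 2/(μ + L), then for every time k ∈ ℕ, (Σ_{i=1}^n ‖x_i^{k+1} − x̄^{k+1}‖²)^{1/2} ≤ β·(Σ_{i=1}^n ‖x_i^k − x̄^k‖²)^{1/2} + αβL·√n·‖x̄^k − x̃^{k*}‖ + αβL·√n·Δ_x + αβ·√n·D. -/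
open Finset Filter

variable {E : Type*} [NormedAddCommGroup E] [InnerProductSpace ℝ E] [CompleteSpace E]

lemma grad_line (f : E → ℝ) (g : E → E) (hg : ∀ p, HasGradientAt f (g p) p)
    (z u : E) (t : ℝ) :
    HasDerivAt (fun s : ℝ => f (z + s • u)) (inner ℝ (g (z + t • u)) u : ℝ) t := by
  have h1 : HasDerivAt (fun s : ℝ => z + s • u) u t := by
    simpa using ((hasDerivAt_id t).smul_const u).const_add z
  have h2 := ((hg (z + t • u)).hasFDerivAt).comp_hasDerivAt t h1
  exact (by simpa using h2 : HasDerivAt (f ∘ fun s : ℝ => z + s • u) (inner ℝ (g (z + t • u)) u : ℝ) t)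

lemma grad_lower (f : E → ℝ) (g : E → E) (hg : ∀ p, HasGradientAt f (g p) p)
    (hmono : ∀ a b : E, 0 ≤ (inner ℝ (g a - g b) (a - b) : ℝ)) (x y : E) :
    f x + inner ℝ (g x) (y - x) ≤ f y := by
  set u := y - x with hu
  have hD : ∀ t : ℝ, HasDerivAt (fun s : ℝ => f (x + s • u))
      (inner ℝ (g (x + t • u)) u : ℝ) t := fun t => grad_line f g hg x u t
  have hcont : ContinuousOn (fun s : ℝ => f (x + s • u)) (Set.Icc 0 1) := by
    intro t _
    exact ((hD t).continuousAt).continuousWithinAt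
  obtain ⟨ξ, hξ, hslope⟩ := exists_hasDerivAt_eq_slope (fun s : ℝ => f (x + s • u))
    (fun t => (inner ℝ (g (x + t • u)) u : ℝ)) zero_lt_one hcont
    (fun t _ => hD t)
  have h1 : x + (1 : ℝ) • u = y := by simp [hu]
  have h0 : x + (0 : ℝ) • u = x := by simp
  rw [h1, h0] at hslope
  simp only [sub_zero, div_one] at hslope
  have hm := hmono (x + ξ • u) x
  have hdiff : (x + ξ • u) - x = ξ • u := by abel
  rw [hdiff, real_inner_smul_right] at hm
  have hξ0 : 0 < ξ := hξ.1
  have h2 : 0 ≤ (inner ℝ (g (x + ξ • u) - g x) u : ℝ) := nonneg_of_mul_nonneg_right hm hξ0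
  rw [inner_sub_left] at h2
  linarith [hslope ▸ h2, hslope]


lemma grad_upper (f : E → ℝ) (g : E → E) (hg : ∀ p, HasGradientAt f (g p) p)
    (L : ℝ) (hL : 0 < L) (hsm : ∀ a b : E, ‖g a - g b‖ ≤ L * ‖a - b‖) (x y : E) :
    f y ≤ f x + inner ℝ (g x) (y - x) + L / 2 * ‖y - x‖ ^ 2 := by
  set u := y - x with hu
  have hD : ∀ t : ℝ, HasDerivAt (fun s : ℝ => f (x + s • u) - L / 2 * s ^ 2 * ‖u‖ ^ 2)
      ((inner ℝ (g (x + t • u)) u : ℝ) - L * t * ‖u‖ ^ 2) t := by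
    intro t
    have h1 := grad_line f g hg x u t
    have h2 : HasDerivAt (fun s : ℝ => L / 2 * s ^ 2 * ‖u‖ ^ 2)
        (L * t * ‖u‖ ^ 2) t := by
      have := ((hasDerivAt_pow 2 t).const_mul (L / 2)).mul_const (‖u‖ ^ 2)
      refine this.congr_deriv ?_
      ring
    exact h1.sub h2
  have hcont : ContinuousOn (fun s : ℝ => f (x + s • u) - L / 2 * s ^ 2 * ‖u‖ ^ 2)
      (Set.Icc 0 1) := fun t _ => ((hD t).continuousAt).continuousWithinAt
  obtain ⟨ξ, hξ, hslope⟩ := exists_hasDerivAt_eq_slope _ _ zero_lt_one hcont (fun t _ => hD t)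
  have h1 : x + (1 : ℝ) • u = y := by simp [hu]
  have h0 : x + (0 : ℝ) • u = x := by simp
  rw [h1, h0] at hslope
  simp only [sub_zero, div_one] at hslope
  -- bound the derivative at ξ
  have hder : (inner ℝ (g (x + ξ • u)) u : ℝ) - L * ξ * ‖u‖ ^ 2 ≤ inner ℝ (g x) u := by
    have h2 : (inner ℝ (g (x + ξ • u) - g x) u : ℝ) ≤ ‖g (x + ξ • u) - g x‖ * ‖u‖ :=
      real_inner_le_norm _ _
    have h3 : ‖g (x + ξ • u) - g x‖ ≤ L * (ξ * ‖u‖) := by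
      have := hsm (x + ξ • u) x
      have hdiff : (x + ξ • u) - x = ξ • u := by abel
      rw [hdiff, norm_smul] at this
      simpa [abs_of_pos hξ.1] using this
    have h4 : ‖g (x + ξ • u) - g x‖ * ‖u‖ ≤ L * ξ * ‖u‖ ^ 2 := by
      have hun : (0:ℝ) ≤ ‖u‖ := norm_nonneg _
      nlinarith
    rw [inner_sub_left] at h2
    linarith
  have := hslope ▸ hder
  nlinarith [this]


lemma grad_cocoercive (f : E → ℝ) (g : E → E) (hg : ∀ p, HasGradientAt f (g p) p)
    (L : ℝ) (hL : 0 < L)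
    (hmono : ∀ a b : E, 0 ≤ (inner ℝ (g a - g b) (a - b) : ℝ))
    (hsm : ∀ a b : E, ‖g a - g b‖ ≤ L * ‖a - b‖) (x y : E) :
    ‖g x - g y‖ ^ 2 ≤ L * inner ℝ (g x - g y) (x - y) := by
  have key : ∀ a b : E,
      f a + inner ℝ (g a) (b - a) + (2 * L)⁻¹ * ‖g b - g a‖ ^ 2 ≤ f b := by
    intro a b
    set z := b - L⁻¹ • (g b - g a) with hz
    have h1 := grad_lower f g hg hmono a z
    have h2 := grad_upper f g hg L hL hsm b z
    have hzb : z - b = -(L⁻¹ • (g b - g a)) := by rw [hz]; abel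
    have hza : z - a = (b - a) - L⁻¹ • (g b - g a) := by rw [hz]; abel
    rw [hza, inner_sub_right, real_inner_smul_right] at h1
    rw [hzb, inner_neg_right, real_inner_smul_right, norm_neg, norm_smul] at h2
    have hnorm : (‖L⁻¹‖ * ‖g b - g a‖) ^ 2 = L⁻¹ ^ 2 * ‖g b - g a‖ ^ 2 := by
      rw [mul_pow, Real.norm_eq_abs, sq_abs]
    rw [hnorm] at h2
    have hib : (inner ℝ (g b) (g b - g a) : ℝ) - (inner ℝ (g a) (g b - g a) : ℝ)
        = ‖g b - g a‖ ^ 2 := by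
      rw [← inner_sub_left, real_inner_self_eq_norm_sq]
    have hL' : L ≠ 0 := ne_of_gt hL
    have e1 : (2 * L)⁻¹ * ‖g b - g a‖ ^ 2
        = L⁻¹ * ‖g b - g a‖ ^ 2 - (L / 2 * (L⁻¹ ^ 2 * ‖g b - g a‖ ^ 2)) := by
      field_simp; ring
    have hib' : L⁻¹ * (inner ℝ (g b) (g b - g a) : ℝ) - L⁻¹ * (inner ℝ (g a) (g b - g a) : ℝ)
        = L⁻¹ * ‖g b - g a‖ ^ 2 := by rw [← mul_sub, hib]
    linarith [h1, h2, hib', e1]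
  have k1 := key x y
  have k2 := key y x
  have hrev : ‖g x - g y‖ = ‖g y - g x‖ := norm_sub_rev _ _
  have hsum : (inner ℝ (g x) (y - x) : ℝ) + (inner ℝ (g y) (x - y) : ℝ)
      = -(inner ℝ (g x - g y) (x - y) : ℝ) := by
    rw [inner_sub_left]
    have : (inner ℝ (g x) (y - x) : ℝ) = -(inner ℝ (g x) (x - y) : ℝ) := by
      rw [← inner_neg_right]; congr 1; abel
    rw [this]; ring
  have h2L : (0:ℝ) < 2 * L := by linarith
  have := add_le_add k1 k2
  rw [hrev] at this
  have hfin : 2 * ((2 * L)⁻¹ * ‖g y - g x‖ ^ 2) ≤ inner ℝ (g x - g y) (x - y) := by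
    nlinarith [this, hsum]
  have : ‖g y - g x‖ ^ 2 ≤ L * inner ℝ (g x - g y) (x - y) := by
    have e : 2 * ((2 * L)⁻¹ * ‖g y - g x‖ ^ 2) = L⁻¹ * ‖g y - g x‖ ^ 2 := by
      field_simp
    rw [e] at hfin
    calc ‖g y - g x‖ ^ 2 = L * (L⁻¹ * ‖g y - g x‖ ^ 2) := by field_simp
    _ ≤ L * inner ℝ (g x - g y) (x - y) := by
        exact mul_le_mul_of_nonneg_left hfin (le_of_lt hL)
  rw [← hrev] at this
  exact this

lemma grad_contraction (f : E → ℝ) (g : E → E) (hg : ∀ p, HasGradientAt f (g p) p)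
    (μ L α : ℝ) (hμ : 0 < μ) (hμL : μ ≤ L) (hα0 : 0 < α) (hα : α ≤ 2 / (μ + L))
    (hsc : ∀ a b : E, μ * ‖a - b‖ ^ 2 ≤ (inner ℝ (g a - g b) (a - b) : ℝ))
    (hsm : ∀ a b : E, ‖g a - g b‖ ≤ L * ‖a - b‖) (x y : E) :
    ‖(x - y) - α • (g x - g y)‖ ≤ ‖x - y‖ := by
  have hL : 0 < L := lt_of_lt_of_le hμ hμL
  have hmono : ∀ a b : E, 0 ≤ (inner ℝ (g a - g b) (a - b) : ℝ) := by
    intro a b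
    have := hsc a b
    nlinarith [sq_nonneg ‖a - b‖]
  have hkey := grad_cocoercive f g hg L hL hmono hsm x y
  have hip : (0:ℝ) ≤ inner ℝ (g x - g y) (x - y) := hmono x y
  have hsq : ‖(x - y) - α • (g x - g y)‖ ^ 2 ≤ ‖x - y‖ ^ 2 := by
    rw [norm_sub_sq_real, norm_smul, real_inner_smul_right]
    have habs : ‖α‖ = α := by rw [Real.norm_eq_abs, abs_of_pos hα0]
    rw [habs, mul_pow]
    have hcomm : (inner ℝ (x - y) (g x - g y) : ℝ) = inner ℝ (g x - g y) (x - y) :=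
      real_inner_comm _ _
    rw [hcomm]
    have hμLpos : (0:ℝ) < μ + L := by linarith
    have hαL : α * (μ + L) ≤ 2 := by
      rw [div_eq_mul_inv] at hα
      calc α * (μ + L) ≤ 2 * (μ + L)⁻¹ * (μ + L) := by
            exact mul_le_mul_of_nonneg_right hα (le_of_lt hμLpos)
      _ = 2 := by field_simp
    -- α^2 ‖Δ‖^2 ≤ α * (α L ⟪Δ,u⟫) ≤ 2 α ⟪Δ,u⟫
    nlinarith [mul_le_mul_of_nonneg_left hkey (sq_nonneg α),
      mul_nonneg (sub_nonneg.2 hαL) (mul_nonneg hα0.le hip),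
      mul_nonneg (mul_nonneg (mul_nonneg hα0.le hα0.le) hμ.le) hip]
  have h1 : ‖(x - y) - α • (g x - g y)‖ = Real.sqrt (‖(x - y) - α • (g x - g y)‖ ^ 2) := by
    rw [Real.sqrt_sq (norm_nonneg _)]
  have h2 : ‖x - y‖ = Real.sqrt (‖x - y‖ ^ 2) := by rw [Real.sqrt_sq (norm_nonneg _)]
  rw [h1, h2]
  exact Real.sqrt_le_sqrt hsq


lemma variance_le {n : ℕ} (u : Fin n → E) (c : E) :
    ∑ j, ‖u j - (n : ℝ)⁻¹ • ∑ i, u i‖ ^ 2 ≤ ∑ j, ‖u j - c‖ ^ 2 := by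
  rcases Nat.eq_zero_or_pos n with h | h
  · subst h; simp
  have hn0 : ((n : ℝ)) ≠ 0 := by positivity
  set m := (n : ℝ)⁻¹ • ∑ i, u i with hm
  have hsum : ∑ j, (u j - c) = (n : ℝ) • (m - c) := by
    rw [hm, smul_sub, smul_smul, mul_inv_cancel₀ hn0, one_smul, Finset.sum_sub_distrib]
    congr 1
    rw [Finset.sum_const, Finset.card_univ, Fintype.card_fin]
    exact (Nat.cast_smul_eq_nsmul ℝ n c).symm
  have expand : ∀ j, ‖u j - m‖ ^ 2
      = ‖u j - c‖ ^ 2 - 2 * (inner ℝ (u j - c) (m - c) : ℝ) + ‖m - c‖ ^ 2 := by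
    intro j
    have : u j - m = (u j - c) - (m - c) := by abel
    rw [this, norm_sub_sq_real]
  calc ∑ j, ‖u j - m‖ ^ 2
      = ∑ j, (‖u j - c‖ ^ 2 - 2 * (inner ℝ (u j - c) (m - c) : ℝ) + ‖m - c‖ ^ 2) := by
        exact Finset.sum_congr rfl fun j _ => expand j
    _ = ∑ j, ‖u j - c‖ ^ 2 - 2 * (inner ℝ (∑ j, (u j - c)) (m - c) : ℝ)
        + (n : ℝ) * ‖m - c‖ ^ 2 := by
        rw [Finset.sum_add_distrib, Finset.sum_sub_distrib, sum_inner, Finset.mul_sum,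
          Finset.sum_const, Finset.card_univ, Fintype.card_fin, nsmul_eq_mul]
    _ = ∑ j, ‖u j - c‖ ^ 2 - 2 * ((n : ℝ) * ‖m - c‖ ^ 2) + (n : ℝ) * ‖m - c‖ ^ 2 := by
        rw [hsum, real_inner_smul_left, real_inner_self_eq_norm_sq]
    _ ≤ ∑ j, ‖u j - c‖ ^ 2 := by
        have : (0:ℝ) ≤ (n : ℝ) * ‖m - c‖ ^ 2 := by positivity
        linarith

lemma l2_triangle3 {n : ℕ} (p q r : Fin n → E) :
    Real.sqrt (∑ j, ‖p j + q j + r j‖ ^ 2) ≤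
      Real.sqrt (∑ j, ‖p j‖ ^ 2) + Real.sqrt (∑ j, ‖q j‖ ^ 2)
        + Real.sqrt (∑ j, ‖r j‖ ^ 2) := by
  let P : PiLp 2 (fun _ : Fin n => E) := WithLp.toLp 2 p
  let Q : PiLp 2 (fun _ : Fin n => E) := WithLp.toLp 2 q
  let R : PiLp 2 (fun _ : Fin n => E) := WithLp.toLp 2 r
  have h := norm_add₃_le (a := P) (b := Q) (c := R)
  rw [PiLp.norm_eq_of_L2, PiLp.norm_eq_of_L2, PiLp.norm_eq_of_L2, PiLp.norm_eq_of_L2] at h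
  exact h

lemma sqrt_sum_sq_le_sum {n : ℕ} (a : Fin n → ℝ) (ha : ∀ j, 0 ≤ a j) :
    Real.sqrt (∑ j, (a j) ^ 2) ≤ ∑ j, a j := by
  have h1 : ∑ j, (a j) ^ 2 ≤ (∑ j, a j) ^ 2 :=
    Finset.sum_sq_le_sq_sum_of_nonneg fun j _ => ha j
  calc Real.sqrt (∑ j, (a j) ^ 2) ≤ Real.sqrt ((∑ j, a j) ^ 2) := Real.sqrt_le_sqrt h1
    _ = ∑ j, a j := Real.sqrt_sq (Finset.sum_nonneg fun j _ => ha j)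

lemma sqrt_sum_sq_le_const {n : ℕ} (a : Fin n → ℝ) (M : ℝ) (hM : 0 ≤ M)
    (ha0 : ∀ j, 0 ≤ a j) (ha : ∀ j, a j ≤ M) :
    Real.sqrt (∑ j, (a j) ^ 2) ≤ Real.sqrt n * M := by
  have h1 : ∑ j, (a j) ^ 2 ≤ (n : ℝ) * M ^ 2 := by
    calc ∑ j, (a j) ^ 2 ≤ ∑ _j : Fin n, M ^ 2 :=
          Finset.sum_le_sum fun j _ => pow_le_pow_left₀ (ha0 j) (ha j) 2
      _ = (n : ℝ) * M ^ 2 := by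
          rw [Finset.sum_const, Finset.card_univ, Fintype.card_fin, nsmul_eq_mul]
  calc Real.sqrt (∑ j, (a j) ^ 2) ≤ Real.sqrt ((n : ℝ) * M ^ 2) := Real.sqrt_le_sqrt h1
    _ = Real.sqrt n * M := by
        rw [Real.sqrt_mul (by positivity), Real.sqrt_sq hM]

theorem diffusion_consensus_error
    (n d : ℕ) (hn : 1 ≤ n) (hd : 1 ≤ d)
    (μ L : ℝ) (hμ : 0 < μ) (hμL : μ ≤ L)
    (f : ℕ → Fin n → EuclideanSpace ℝ (Fin d) → ℝ)
    (g : ℕ → Fin n → EuclideanSpace ℝ (Fin d) → EuclideanSpace ℝ (Fin d))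
    (hgrad : ∀ k i x, HasGradientAt (f k i) (g k i x) x)
    (hsc : ∀ k i x y, (inner ℝ (g k i x - g k i y) (x - y) : ℝ) ≥ μ * ‖x - y‖ ^ 2)
    (hsm : ∀ k i x y, ‖g k i x - g k i y‖ ≤ L * ‖x - y‖)
    (xstar : ℕ → EuclideanSpace ℝ (Fin d))
    (hopt : ∀ k, ∑ i, g k i (xstar k) = 0)
    (Δx : ℝ) (hΔx : 0 < Δx)
    (hdrift : ∀ k, ‖xstar (k + 1) - xstar k‖ ≤ Δx)
    (D : ℝ) (hD : 0 < D)
    (hgradbound : ∀ k, (Real.sqrt n)⁻¹ * ∑ i, ‖g k i (xstar k)‖ ≤ D)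
    (W : Fin n → Fin n → ℝ)
    (hWnonneg : ∀ i j, 0 ≤ W i j)
    (hWrow : ∀ i, ∑ j, W i j = 1)
    (hWcol : ∀ j, ∑ i, W i j = 1)
    (β : ℝ) (hβ0 : 0 ≤ β) (hβ1 : β < 1)
    (hβ : ∀ v : Fin n → EuclideanSpace ℝ (Fin d), (∑ i, v i) = 0 →
      Real.sqrt (∑ i, ‖∑ j, W i j • v j‖ ^ 2) ≤ β * Real.sqrt (∑ i, ‖v i‖ ^ 2))
    (α : ℝ) (hα0 : 0 < α) (hα : α ≤ 2 / (μ + L))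
    (x : ℕ → Fin n → EuclideanSpace ℝ (Fin d))
    (hx : ∀ k i, x (k + 1) i = ∑ j, W i j • (x k j - α • g (k + 1) j (x k j)))
    (xbar : ℕ → EuclideanSpace ℝ (Fin d))
    (hxbar : ∀ k, xbar k = (n : ℝ)⁻¹ • ∑ i, x k i)
    (k : ℕ) :
    Real.sqrt (∑ i, ‖x (k + 1) i - xbar (k + 1)‖ ^ 2) ≤
      β * Real.sqrt (∑ i, ‖x k i - xbar k‖ ^ 2)
      + α * β * L * (Real.sqrt n * ‖xbar k - xstar k‖)
      + α * β * L * (Real.sqrt n * Δx)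
      + α * β * (Real.sqrt n * D) := by
  have hn0 : (0:ℝ) < n := by exact_mod_cast hn
  have hnne : ((n:ℝ)) ≠ 0 := ne_of_gt hn0
  set y : Fin n → EuclideanSpace ℝ (Fin d) :=
    fun j => x k j - α • g (k + 1) j (x k j) with hy
  set m : EuclideanSpace ℝ (Fin d) := (n : ℝ)⁻¹ • ∑ j, y j with hm
  have hxk1 : ∀ i, x (k + 1) i = ∑ j, W i j • y j := fun i => hx k i
  have hsumy : ∑ i, x (k + 1) i = ∑ j, y j := by
    calc ∑ i, x (k + 1) i = ∑ i, ∑ j, W i j • y j :=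
          Finset.sum_congr rfl fun i _ => hxk1 i
      _ = ∑ j, ∑ i, W i j • y j := Finset.sum_comm
      _ = ∑ j, (∑ i, W i j) • y j :=
          Finset.sum_congr rfl fun j _ => (Finset.sum_smul).symm
      _ = ∑ j, y j := Finset.sum_congr rfl fun j _ => by rw [hWcol j, one_smul]
  have hxbar1 : xbar (k + 1) = m := by rw [hxbar (k + 1), hsumy, hm]
  set v : Fin n → EuclideanSpace ℝ (Fin d) := fun j => y j - m with hv
  have hconstm : ∑ _j : Fin n, m = (n : ℝ) • m := by
    rw [Finset.sum_const, Finset.card_univ, Fintype.card_fin]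
    exact (Nat.cast_smul_eq_nsmul ℝ n m).symm
  have hvsum : ∑ j, v j = 0 := by
    rw [hv]
    simp only
    rw [Finset.sum_sub_distrib, hconstm, hm, smul_smul, mul_inv_cancel₀ hnne, one_smul,
      sub_self]
  have hdiff : ∀ i, x (k + 1) i - xbar (k + 1) = ∑ j, W i j • v j := by
    intro i
    rw [hxbar1, hxk1 i]
    have : ∑ j, W i j • v j = ∑ j, W i j • y j - m := by
      rw [hv]
      simp only [smul_sub]
      rw [Finset.sum_sub_distrib, ← Finset.sum_smul, hWrow i, one_smul]
    rw [this]
  have step1 : Real.sqrt (∑ i, ‖x (k + 1) i - xbar (k + 1)‖ ^ 2)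
      ≤ β * Real.sqrt (∑ i, ‖v i‖ ^ 2) := by
    have hrw : (∑ i, ‖x (k + 1) i - xbar (k + 1)‖ ^ 2)
        = ∑ i, ‖∑ j, W i j • v j‖ ^ 2 :=
      Finset.sum_congr rfl fun i _ => by rw [hdiff i]
    rw [hrw]
    exact hβ v hvsum
  have step2 : Real.sqrt (∑ j, ‖v j‖ ^ 2) ≤ Real.sqrt (∑ j, ‖y j - xbar k‖ ^ 2) :=
    Real.sqrt_le_sqrt (variance_le y (xbar k))
  set p : Fin n → EuclideanSpace ℝ (Fin d) :=
    fun j => (x k j - xbar k) - α • (g (k + 1) j (x k j) - g (k + 1) j (xbar k)) with hp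
  set q : Fin n → EuclideanSpace ℝ (Fin d) :=
    fun j => -(α • (g (k + 1) j (xbar k) - g (k + 1) j (xstar (k + 1)))) with hq
  set r : Fin n → EuclideanSpace ℝ (Fin d) :=
    fun j => -(α • g (k + 1) j (xstar (k + 1))) with hr
  have hdecomp : ∀ j, y j - xbar k = p j + q j + r j := by
    intro j
    rw [hy, hp, hq, hr]
    simp only [smul_sub]
    abel
  have step3 : Real.sqrt (∑ j, ‖y j - xbar k‖ ^ 2)
      ≤ Real.sqrt (∑ j, ‖p j‖ ^ 2) + Real.sqrt (∑ j, ‖q j‖ ^ 2)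
        + Real.sqrt (∑ j, ‖r j‖ ^ 2) := by
    have hrw : (∑ j, ‖y j - xbar k‖ ^ 2) = ∑ j, ‖p j + q j + r j‖ ^ 2 :=
      Finset.sum_congr rfl fun j _ => by rw [hdecomp j]
    rw [hrw]
    exact l2_triangle3 p q r
  have hP : Real.sqrt (∑ j, ‖p j‖ ^ 2) ≤ Real.sqrt (∑ j, ‖x k j - xbar k‖ ^ 2) := by
    apply Real.sqrt_le_sqrt
    apply Finset.sum_le_sum
    intro j _
    have hctr := grad_contraction (f (k + 1) j) (g (k + 1) j) (hgrad (k + 1) j)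
      μ L α hμ hμL hα0 hα (fun a b => hsc (k + 1) j a b) (hsm (k + 1) j)
      (x k j) (xbar k)
    exact pow_le_pow_left₀ (norm_nonneg _) hctr 2
  set M : ℝ := α * L * (‖xbar k - xstar k‖ + Δx) with hM
  have hL : (0:ℝ) < L := lt_of_lt_of_le hμ hμL
  have hMnn : 0 ≤ M := by positivity
  have hQ : Real.sqrt (∑ j, ‖q j‖ ^ 2) ≤ Real.sqrt n * M := by
    apply sqrt_sum_sq_le_const _ M hMnn (fun j => norm_nonneg _)
    intro j
    rw [hq]
    simp only [norm_neg, norm_smul, Real.norm_eq_abs, abs_of_pos hα0]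
    have h1 : ‖g (k + 1) j (xbar k) - g (k + 1) j (xstar (k + 1))‖
        ≤ L * ‖xbar k - xstar (k + 1)‖ := hsm (k + 1) j _ _
    have h2 : ‖xbar k - xstar (k + 1)‖ ≤ ‖xbar k - xstar k‖ + Δx := by
      have h3 : xbar k - xstar (k + 1) = (xbar k - xstar k) - (xstar (k + 1) - xstar k) := by
        abel
      rw [h3]
      calc ‖(xbar k - xstar k) - (xstar (k + 1) - xstar k)‖
          ≤ ‖xbar k - xstar k‖ + ‖xstar (k + 1) - xstar k‖ := norm_sub_le _ _
        _ ≤ ‖xbar k - xstar k‖ + Δx := by linarith [hdrift k]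
    rw [hM]
    calc α * ‖g (k + 1) j (xbar k) - g (k + 1) j (xstar (k + 1))‖
        ≤ α * (L * ‖xbar k - xstar (k + 1)‖) :=
          mul_le_mul_of_nonneg_left h1 hα0.le
      _ ≤ α * (L * (‖xbar k - xstar k‖ + Δx)) := by
          apply mul_le_mul_of_nonneg_left _ hα0.le
          exact mul_le_mul_of_nonneg_left h2 hL.le
      _ = α * L * (‖xbar k - xstar k‖ + Δx) := by ring
  have hR : Real.sqrt (∑ j, ‖r j‖ ^ 2) ≤ α * (Real.sqrt n * D) := by
    have hsn : (0:ℝ) < Real.sqrt n := Real.sqrt_pos.2 hn0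
    have hgb : (∑ j, ‖g (k + 1) j (xstar (k + 1))‖) ≤ Real.sqrt n * D := by
      have h := hgradbound (k + 1)
      calc (∑ j, ‖g (k + 1) j (xstar (k + 1))‖)
          = Real.sqrt n * ((Real.sqrt n)⁻¹ * ∑ j, ‖g (k + 1) j (xstar (k + 1))‖) := by
            rw [← mul_assoc, mul_inv_cancel₀ (ne_of_gt hsn), one_mul]
        _ ≤ Real.sqrt n * D := mul_le_mul_of_nonneg_left h hsn.le
    calc Real.sqrt (∑ j, ‖r j‖ ^ 2) ≤ ∑ j, ‖r j‖ :=
          sqrt_sum_sq_le_sum _ fun j => norm_nonneg _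
      _ = α * ∑ j, ‖g (k + 1) j (xstar (k + 1))‖ := by
          rw [Finset.mul_sum]
          refine Finset.sum_congr rfl fun j _ => ?_
          rw [hr]
          simp only [norm_neg, norm_smul, Real.norm_eq_abs, abs_of_pos hα0]
      _ ≤ α * (Real.sqrt n * D) := mul_le_mul_of_nonneg_left hgb hα0.le
  have chain : Real.sqrt (∑ i, ‖x (k + 1) i - xbar (k + 1)‖ ^ 2)
      ≤ β * (Real.sqrt (∑ j, ‖x k j - xbar k‖ ^ 2) + Real.sqrt n * M
          + α * (Real.sqrt n * D)) := by
    refine step1.trans ?_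
    apply mul_le_mul_of_nonneg_left _ hβ0
    refine step2.trans (step3.trans ?_)
    exact add_le_add (add_le_add hP hQ) hR
  refine chain.trans (le_of_eq ?_)
  rw [hM]
  ring
end

section
/- Let A be the 2×2 real matrix A = [[1 − αμ/2, αL], [αβL, β]]. If 0 < α ≤ μ(1−β)/(10L²), then the spectral radius of A satisfies ρ(A) ≤ 1 − 3μα/8 < 1 (every eigenvalue of A has modulus at most 1 − 3μα/8). -/
lemma quad_root_sq_le (T D r x : ℝ) (hT : 0 < T) (hr2 : 0 < 2*r - T) (hD : 0 < D)
    (hpr : 0 ≤ r^2 - T*r + D) (hx : x^2 - T*x + D = 0) : x^2 ≤ r^2 := by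
  have hr : 0 < r := by linarith
  have h1 : x ≤ r := by
    by_contra hc
    push_neg at hc
    nlinarith [mul_pos (sub_pos.2 hc) hr2, sq_nonneg (x - r)]
  have h2 : -r ≤ x := by
    by_contra hc
    push_neg at hc
    nlinarith [mul_pos hT (by linarith : (0:ℝ) < -x), sq_nonneg x]
  nlinarith

set_option maxHeartbeats 1000000 in
theorem diffusion_matrix_spectral_radius
    (μ L β α : ℝ) (hμ : 0 < μ) (hμL : μ ≤ L) (hβ0 : 0 < β) (hβ1 : β < 1)
    (hα0 : 0 < α) (hα : α ≤ μ * (1 - β) / (10 * L ^ 2)) :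
    (∀ z : ℂ,
      ((!![1 - α * μ / 2, α * L; α * β * L, β] : Matrix (Fin 2) (Fin 2) ℝ).map
        (fun r : ℝ => (r : ℂ))).charpoly.IsRoot z →
      ‖z‖ ≤ 1 - 3 * μ * α / 8) ∧
    1 - 3 * μ * α / 8 < 1 := by
  have hL : 0 < L := lt_of_lt_of_le hμ hμL
  have hα' : α * (10 * L ^ 2) ≤ μ * (1 - β) := by
    rw [div_eq_mul_inv] at hα
    calc α * (10 * L ^ 2) ≤ (μ * (1 - β) * (10 * L ^ 2)⁻¹) * (10 * L ^ 2) := by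
          apply mul_le_mul_of_nonneg_right hα (by positivity)
      _ = μ * (1 - β) := by field_simp
  have hμ2 : μ ^ 2 ≤ L ^ 2 := by nlinarith
  have hm : 10 * (μ * α) ≤ 1 - β := by
    have h2 : 10 * μ ^ 2 * α ≤ 10 * L ^ 2 * α :=
      by nlinarith [mul_le_mul_of_nonneg_right hμ2 hα0.le]
    have h3 : μ * (10 * (μ * α)) ≤ μ * (1 - β) := by nlinarith
    exact le_of_mul_le_mul_left h3 hμ
  have hmpos : 0 < μ * α := mul_pos hμ hα0
  have hm10 : μ * α < 1 / 10 := by nlinarith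
  have hL2 : α ^ 2 * L ^ 2 ≤ μ * α * (1 - β) / 10 := by nlinarith
  have hβ' : 0 < 1 - β := by linarith
  have hL2' : α ^ 2 * L ^ 2 < 1 / 100 := by nlinarith
  constructor
  · intro z h
    rw [Matrix.charpoly, Matrix.det_fin_two] at h
    simp only [Polynomial.IsRoot, Matrix.charmatrix_apply, Matrix.map_apply,
      Matrix.cons_val', Matrix.cons_val_zero, Matrix.cons_val_one, Matrix.head_cons,
      Matrix.head_fin_const, Matrix.empty_val', Matrix.cons_val_fin_one,
      Matrix.diagonal_apply, Polynomial.eval_sub, Polynomial.eval_mul, Polynomial.eval_X,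
      Polynomial.eval_C, if_true, if_false] at h
    norm_num at h
    have h1 := congrArg Complex.re h
    have h2 := congrArg Complex.im h
    simp only [Complex.sub_re, Complex.mul_re, Complex.mul_im, Complex.sub_im,
      Complex.ofReal_re, Complex.ofReal_im, Complex.one_re, Complex.one_im,
      Complex.zero_re, Complex.zero_im, Complex.div_ofNat_re, Complex.div_ofNat_im,
      mul_one, mul_zero, zero_mul, sub_zero, zero_sub, zero_div] at h1 h2
    set x := z.re with hxdef
    set y := z.im with hydef
    have hr0 : (0:ℝ) < 1 - 3 * μ * α / 8 := by linarith
    -- trace and determinant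
    have hT : (0:ℝ) < (1 - α * μ / 2) + β := by nlinarith
    have hDpos : (0:ℝ) < (1 - α * μ / 2) * β - α * L * (α * β * L) := by
      nlinarith [mul_lt_mul_of_pos_left hm10 hβ0, mul_lt_mul_of_pos_left hL2' hβ0]
    have hr2 : (0:ℝ) < 2 * (1 - 3 * μ * α / 8) - ((1 - α * μ / 2) + β) := by nlinarith
    have hAb : α ^ 2 * L ^ 2 * β ≤ α ^ 2 * L ^ 2 := by
      nlinarith [mul_nonneg (mul_nonneg (sq_nonneg α) (sq_nonneg L)) hβ'.le]
    have hB : μ * α * (10 * (μ * α)) ≤ μ * α * (1 - β) :=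
      mul_le_mul_of_nonneg_left hm hmpos.le
    have hpr : (0:ℝ) ≤ (1 - 3 * μ * α / 8) ^ 2 - ((1 - α * μ / 2) + β) * (1 - 3 * μ * α / 8)
        + ((1 - α * μ / 2) * β - α * L * (α * β * L)) := by nlinarith [hAb, hL2, hB]
    have key : x ^ 2 + y ^ 2 ≤ (1 - 3 * μ * α / 8) ^ 2 := by
      rcases eq_or_ne y 0 with hy0 | hy0
      · rw [hy0] at h1 ⊢
        have hxq : x ^ 2 - ((1 - α * μ / 2) + β) * x +
            ((1 - α * μ / 2) * β - α * L * (α * β * L)) = 0 := by linear_combination h1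
        have := quad_root_sq_le ((1 - α * μ / 2) + β)
          ((1 - α * μ / 2) * β - α * L * (α * β * L)) (1 - 3 * μ * α / 8) x
          hT hr2 hDpos hpr hxq
        nlinarith [this]
      · have hxT : 2 * x = (1 - α * μ / 2) + β := by
          have h2' : y * (2 * x - ((1 - α * μ / 2) + β)) = 0 := by linear_combination h2
          rcases mul_eq_zero.mp h2' with hc | hc
          · exact absurd hc hy0
          · linarith
        have hD : x ^ 2 + y ^ 2 = (1 - α * μ / 2) * β - α * L * (α * β * L) := by
          linear_combination x * hxT - h1
        rw [hD]
        nlinarith [mul_nonneg hβ0.le hmpos.le,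
          mul_nonneg (mul_nonneg (mul_nonneg hα0.le hL.le) (mul_nonneg hα0.le hβ0.le)) hL.le,
          sq_nonneg (μ * α)]
    have habs : ‖z‖ = Real.sqrt (x ^ 2 + y ^ 2) := by
      rw [Complex.norm_def, Complex.normSq_apply]
      norm_num [pow_two]
      rfl
    rw [habs]
    calc Real.sqrt (x ^ 2 + y ^ 2) ≤ Real.sqrt ((1 - 3 * μ * α / 8) ^ 2) :=
          Real.sqrt_le_sqrt key
      _ = 1 - 3 * μ * α / 8 := Real.sqrt_sq hr0.le
  · nlinarith
end

section
/- Let A be the 3×3 real matrix A = [[(1+β)/2, 5L, 3L], [αβ, β, 0], [0, αL, 1 − αμ/2]]. If 0 < α ≤ (1−β)²μ/(768L²), then the spectral radius of A satisfies ρ(A) ≤ 1 − αμ/4 < 1 (every eigenvalue of A has modulus at most 1 − αμ/4). -/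
open Matrix Polynomial

lemma eval_charpoly3 (M : Matrix (Fin 3) (Fin 3) ℂ) (z : ℂ) :
    M.charpoly.eval z = (z • (1 : Matrix (Fin 3) (Fin 3) ℂ) - M).det := by
  rw [Matrix.charpoly, ← Polynomial.coe_evalRingHom, RingHom.map_det]
  congr 1
  ext i j
  by_cases h : i = j
  · subst h; simp [Matrix.charmatrix_apply_eq, Matrix.one_apply]
  · simp [Matrix.charmatrix_apply_ne _ _ _ h, Matrix.one_apply, h]

lemma hasEig3 (B : Matrix (Fin 3) (Fin 3) ℂ) (z : ℂ)
    (h : (z • (1 : Matrix (Fin 3) (Fin 3) ℂ) - B).det = 0) :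
    Module.End.HasEigenvalue (Matrix.toLin' B) z := by
  obtain ⟨v, hv0, hv⟩ := (Matrix.exists_mulVec_eq_zero_iff).mpr h
  have hBv : B.mulVec v = z • v := by
    rw [Matrix.sub_mulVec, sub_eq_zero, Matrix.smul_mulVec, Matrix.one_mulVec] at hv
    exact hv.symm
  exact Module.End.hasEigenvalue_of_hasEigenvector
    ⟨Module.End.mem_eigenspace_iff.mpr (by simpa [Matrix.toLin'_apply] using hBv), hv0⟩

set_option maxHeartbeats 1600000 in
theorem dgt_matrix_spectral_radius
    (μ L β α : ℝ) (hμ : 0 < μ) (hμL : μ ≤ L) (hβ0 : 0 < β) (hβ1 : β < 1)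
    (hα0 : 0 < α) (hα : α ≤ (1 - β) ^ 2 * μ / (768 * L ^ 2)) :
    (∀ z : ℂ,
      ((!![(1 + β) / 2, 5 * L, 3 * L;
           α * β, β, 0;
           0, α * L, 1 - α * μ / 2] : Matrix (Fin 3) (Fin 3) ℝ).map
        (fun r : ℝ => (r : ℂ))).charpoly.IsRoot z →
      ‖z‖ ≤ 1 - α * μ / 4) ∧
    1 - α * μ / 4 < 1 := by
  have hL : 0 < L := hμ.trans_le hμL
  have h1β : 0 < 1 - β := by linarith
  have hα' : α * (768 * L ^ 2) ≤ (1 - β) ^ 2 * μ := by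
    rw [le_div_iff₀ (by positivity)] at hα; linarith
  have hkey : α * μ ≤ (1 - β) ^ 2 / 768 := by
    have hμ2 : μ * μ ≤ L * L := mul_le_mul hμL hμL hμ.le hL.le
    rw [le_div_iff₀ (by norm_num : (0:ℝ) < 768)]
    nlinarith [mul_le_mul_of_nonneg_left hα' hμ.le, sq_nonneg (1 - β)]
  have hkey2 : α * L ^ 2 ≤ (1 - β) ^ 2 * μ / 768 := by
    rw [le_div_iff₀ (by norm_num : (0:ℝ) < 768)]; linarith
  have hkey' : α * μ ≤ (1 - β) / 768 := by nlinarith [hkey]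
  refine ⟨fun z hz => ?_, by nlinarith⟩
  set t1 : ℝ := 17 * L / (1 - β) with ht1def
  set t2 : ℝ := μ / (4 * L) with ht2def
  have ht1 : 0 < t1 := by rw [ht1def]; positivity
  have ht2 : 0 < t2 := by rw [ht2def]; positivity
  have e1 : 5 * L * t2 / t1 = 5 * μ * (1 - β) / (68 * L) := by
    rw [ht1def, ht2def]; field_simp; ring
  have e2 : 3 * L / t1 = 3 * (1 - β) / 17 := by
    rw [ht1def]; field_simp
  have e3 : α * β * t1 / t2 = 68 * α * β * L ^ 2 / ((1 - β) * μ) := by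
    rw [ht1def, ht2def]; field_simp; ring
  have e4 : α * L * t2 = α * μ / 4 := by
    rw [ht2def]; field_simp
  clear_value t1 t2
  clear ht1def ht2def
  have ht1' : ((t1 : ℝ) : ℂ) ≠ 0 := by exact_mod_cast ht1.ne'
  have ht2' : ((t2 : ℝ) : ℂ) ≠ 0 := by exact_mod_cast ht2.ne'
  set A : Matrix (Fin 3) (Fin 3) ℂ :=
    (!![(1 + β) / 2, 5 * L, 3 * L;
        α * β, β, 0;
        0, α * L, 1 - α * μ / 2] : Matrix (Fin 3) (Fin 3) ℝ).map (fun r : ℝ => (r : ℂ)) with hA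
  set B : Matrix (Fin 3) (Fin 3) ℂ :=
    !![(((1 + β) / 2 : ℝ) : ℂ), ((5 * L * t2 / t1 : ℝ) : ℂ), ((3 * L / t1 : ℝ) : ℂ);
       ((α * β * t1 / t2 : ℝ) : ℂ), ((β : ℝ) : ℂ), 0;
       0, ((α * L * t2 : ℝ) : ℂ), ((1 - α * μ / 2 : ℝ) : ℂ)] with hB
  set D : Matrix (Fin 3) (Fin 3) ℂ := Matrix.diagonal ![(t1 : ℂ), (t2 : ℂ), 1] with hD
  set Dinv : Matrix (Fin 3) (Fin 3) ℂ :=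
    Matrix.diagonal ![((t1 : ℂ))⁻¹, ((t2 : ℂ))⁻¹, 1] with hDinv
  have hDD : Dinv * D = 1 := by
    rw [hD, hDinv, Matrix.diagonal_mul_diagonal]
    ext i j
    fin_cases i <;> fin_cases j <;>
      simp [Matrix.diagonal, Matrix.one_apply, inv_mul_cancel₀ ht1', inv_mul_cancel₀ ht2']
  have hBD : B = Dinv * A * D := by
    ext i j
    fin_cases i <;> fin_cases j
    all_goals simp [hB, hDinv, hD, hA, Matrix.mul_apply, Fin.sum_univ_three, Matrix.diagonal]
    all_goals push_cast
    all_goals field_simp [ht1', ht2']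
    all_goals ring
  have hdet : (z • (1 : Matrix (Fin 3) (Fin 3) ℂ) - B).det = 0 := by
    rw [Polynomial.IsRoot, eval_charpoly3] at hz
    have hsplit : z • (1 : Matrix (Fin 3) (Fin 3) ℂ) - B = Dinv * (z • 1 - A) * D := by
      rw [hBD, Matrix.mul_sub, Matrix.sub_mul, Matrix.mul_smul, Matrix.mul_one,
        Matrix.smul_mul, hDD]
    rw [hsplit, Matrix.det_mul, Matrix.det_mul, hz, mul_zero, zero_mul]
  obtain ⟨k, hk⟩ := eigenvalue_mem_ball (hasEig3 B z hdet)
  have hsum : ‖z‖ ≤ ∑ j, ‖B k j‖ := by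
    rw [Metric.mem_closedBall, dist_eq_norm,
      Finset.sum_erase_eq_sub (Finset.mem_univ k)] at hk
    have h1 : ‖z‖ ≤ ‖B k k‖ + ‖z - B k k‖ := by
      simpa using norm_add_le (B k k) (z - B k k)
    calc ‖z‖ = ‖z‖ := rfl
      _ ≤ ∑ j, ‖B k j‖ := by linarith
  clear_value B
  rw [Fin.sum_univ_three] at hsum
  fin_cases k <;> simp [hB] at hsum
  · rw [abs_of_pos hL, abs_of_pos ht1, abs_of_pos ht2,
      show ((1:ℂ) + (β:ℂ)) = (((1 + β : ℝ)) : ℂ) by push_cast; ring, Complex.norm_real, Real.norm_eq_abs,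
      e1, e2, abs_of_pos (by linarith : (0:ℝ) < 1 + β)] at hsum
    have b1 : 5 * μ * (1 - β) / (68 * L) ≤ 5 * (1 - β) / 68 := by
      rw [div_le_div_iff₀ (by positivity) (by norm_num)]; nlinarith
    linarith [hsum, b1, hkey']
  · rw [abs_of_pos hα0, abs_of_pos hβ0, abs_of_pos ht1, abs_of_pos ht2, e3] at hsum
    have b1 : 68 * α * β * L ^ 2 / ((1 - β) * μ) ≤ 68 * β * (1 - β) / 768 := by
      rw [div_le_div_iff₀ (by positivity) (by norm_num)]
      nlinarith [mul_le_mul_of_nonneg_left hkey2 hβ0.le]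
    have b2 : 68 * β * (1 - β) / 768 ≤ 68 * (1 - β) / 768 := by nlinarith
    linarith [hsum, b1, b2, hkey']
  · rw [abs_of_pos hα0, abs_of_pos hL, abs_of_pos ht2, e4,
      show ((1:ℂ) - (α:ℂ) * (μ:ℂ) / 2) = (((1 - α * μ / 2 : ℝ)) : ℂ) by push_cast; ring,
      Complex.norm_real, Real.norm_eq_abs, abs_of_nonneg (by nlinarith [hkey'] : (0:ℝ) ≤ 1 - α * μ / 2)] at hsum
    linarith [hsum]
end

section
/- Let A be the 3×3 real matrix A = [[(1+β)/2, 5L, 3L], [αβ, β, 0], [0, αL, 1 − αμ/2]]. If 0 < α ≤ (1−β)²μ/(768L²), then I − A is invertible and (I − A)^{-1} is bounded entrywise by (8/((1−β)²αμ)) times the matrix [[αμ(1−β)/2, 6αL², 3L(1−β)], [α²βμ/2, αμ(1−β)/4, 3αβL], [α²βL, αL(1−β)/2, (1−β)²/2]]; that is, every entry of (I − A)^{-1} is at most the corresponding entry of this matrix. -/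
set_option maxHeartbeats 1000000

lemma dgt_aux (c d x y : ℝ) (hc : 0 < c) (hd : c / 8 ≤ d) (hxy : x ≤ y) (hy : 0 ≤ y) :
    d⁻¹ * x ≤ 8 / c * y := by
  have hd0 : 0 < d := lt_of_lt_of_le (by positivity) hd
  have h1 : d⁻¹ ≤ 8 / c := by
    rw [← inv_div c 8]
    exact inv_anti₀ (by positivity) hd
  calc d⁻¹ * x ≤ d⁻¹ * y := mul_le_mul_of_nonneg_left hxy (by positivity)
    _ ≤ 8 / c * y := mul_le_mul_of_nonneg_right h1 hy

theorem dgt_matrix_inverse_bound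
    (μ L β α : ℝ) (hμ : 0 < μ) (hμL : μ ≤ L) (hβ0 : 0 < β) (hβ1 : β < 1)
    (hα0 : 0 < α) (hα : α ≤ (1 - β) ^ 2 * μ / (768 * L ^ 2)) :
    IsUnit (1 - (!![(1 + β) / 2, 5 * L, 3 * L;
                    α * β, β, 0;
                    0, α * L, 1 - α * μ / 2] : Matrix (Fin 3) (Fin 3) ℝ)).det ∧
    ∀ i j, (1 - (!![(1 + β) / 2, 5 * L, 3 * L;
                    α * β, β, 0;
                    0, α * L, 1 - α * μ / 2] : Matrix (Fin 3) (Fin 3) ℝ))⁻¹ i j ≤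
      (8 / ((1 - β) ^ 2 * α * μ)) *
      (!![α * μ * (1 - β) / 2, 6 * α * L ^ 2, 3 * L * (1 - β);
          α ^ 2 * β * μ / 2, α * μ * (1 - β) / 4, 3 * α * β * L;
          α ^ 2 * β * L, α * L * (1 - β) / 2, (1 - β) ^ 2 / 2] : Matrix (Fin 3) (Fin 3) ℝ) i j := by
  have hL : 0 < L := lt_of_lt_of_le hμ hμL
  have h1β : 0 < 1 - β := by linarith
  have hαL : α * (768 * L ^ 2) ≤ (1 - β) ^ 2 * μ := (le_div_iff₀ (by positivity)).1 hα
  set A : Matrix (Fin 3) (Fin 3) ℝ :=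
    !![(1 + β) / 2, 5 * L, 3 * L; α * β, β, 0; 0, α * L, 1 - α * μ / 2] with hA
  have hM : (1 : Matrix (Fin 3) (Fin 3) ℝ) - A =
      !![(1 - β) / 2, -(5 * L), -(3 * L); -(α * β), 1 - β, 0; 0, -(α * L), α * μ / 2] := by
    ext i j
    fin_cases i <;> fin_cases j <;>
      simp [hA, Matrix.one_apply, Matrix.sub_apply] <;> ring
  set d : ℝ := (1 - β) ^ 2 * α * μ / 4 - 5 / 2 * α ^ 2 * β * μ * L - 3 * α ^ 2 * β * L ^ 2
    with hdd
  have hdet : ((1 : Matrix (Fin 3) (Fin 3) ℝ) - A).det = d := by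
    rw [hM, Matrix.det_fin_three]
    simp [hdd]
    ring
  have hc : 0 < (1 - β) ^ 2 * α * μ := by positivity
  have h1 : β * μ ≤ L := by nlinarith
  have hβμ : α ^ 2 * β * μ * L ≤ α ^ 2 * L ^ 2 := by
    nlinarith [mul_le_mul_of_nonneg_left h1 (by positivity : (0:ℝ) ≤ α ^ 2 * L)]
  have hβL : α ^ 2 * β * L ^ 2 ≤ α ^ 2 * L ^ 2 := by
    nlinarith [mul_le_mul_of_nonneg_left hβ1.le (by positivity : (0:ℝ) ≤ α ^ 2 * L ^ 2)]
  have hαα : α * (768 * L ^ 2) * α ≤ (1 - β) ^ 2 * μ * α :=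
    mul_le_mul_of_nonneg_right hαL hα0.le
  have hd : (1 - β) ^ 2 * α * μ / 8 ≤ d := by rw [hdd]; nlinarith
  have hd0 : 0 < d := lt_of_lt_of_le (by positivity) hd
  have hdet_unit : IsUnit ((1 : Matrix (Fin 3) (Fin 3) ℝ) - A).det := by
    rw [hdet]; exact isUnit_iff_ne_zero.2 (ne_of_gt hd0)
  refine ⟨hdet_unit, ?_⟩
  have hinv : ((1 : Matrix (Fin 3) (Fin 3) ℝ) - A)⁻¹ =
      d⁻¹ • Matrix.adjugate ((1 : Matrix (Fin 3) (Fin 3) ℝ) - A) := by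
    rw [Matrix.inv_def, hdet, Ring.inverse_eq_inv]
  intro i j
  rw [hinv, hM, Matrix.adjugate_fin_three_of]
  have key := dgt_aux ((1 - β) ^ 2 * α * μ) d
  have h5 : 0 ≤ α * β * L := by positivity
  fin_cases i <;> fin_cases j <;>
    simp [Matrix.smul_apply, smul_eq_mul] <;>
    apply key _ _ hc hd <;>
    first
      | positivity
      | nlinarith [mul_nonneg hα0.le hL.le, mul_nonneg (mul_nonneg hα0.le hL.le) hμ.le,
          mul_nonneg (mul_nonneg hα0.le hL.le) hL.le]
end

section
/- For the DGT iterates: if the step-size satisfies 0 < α ≤ (1−β)²μ/(768L²), then limsup_{k→∞} (1/√n)·(Σ_{i=1}^n ‖x_i^k − x̃^{k*}‖²)^{1/2} ≤ (4/(αμ) + 40βL/((1−β)²μ))·Δ_x + 16αβL·Δ_g/((1−β)²μ). -/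
open Finset Filter

namespace DGTaux

noncomputable def Nsq {n d : ℕ} (v : Fin n → EuclideanSpace ℝ (Fin d)) : ℝ :=
  Real.sqrt (∑ i, ‖v i‖ ^ 2)

variable {n d : ℕ}

lemma Nsq_def (v : Fin n → EuclideanSpace ℝ (Fin d)) :
    Nsq v = Real.sqrt (∑ i, ‖v i‖ ^ 2) := rfl

lemma Nsq_nonneg (v : Fin n → EuclideanSpace ℝ (Fin d)) : 0 ≤ Nsq v := Real.sqrt_nonneg _

lemma Nsq_eq_norm (v : Fin n → EuclideanSpace ℝ (Fin d)) :
    Nsq v = ‖(WithLp.equiv 2 (∀ _ : Fin n, EuclideanSpace ℝ (Fin d))).symm v‖ := by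
  rw [PiLp.norm_eq_of_L2]
  rfl

lemma Nsq_add_le (v w : Fin n → EuclideanSpace ℝ (Fin d)) :
    Nsq (fun i => v i + w i) ≤ Nsq v + Nsq w := by
  rw [Nsq_eq_norm, Nsq_eq_norm, Nsq_eq_norm]
  exact norm_add_le ((WithLp.equiv 2 (∀ _ : Fin n, EuclideanSpace ℝ (Fin d))).symm v)
    ((WithLp.equiv 2 (∀ _ : Fin n, EuclideanSpace ℝ (Fin d))).symm w)

lemma Nsq_mono {c : ℝ} (hc : 0 ≤ c) (v w : Fin n → EuclideanSpace ℝ (Fin d))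
    (h : ∀ i, ‖v i‖ ≤ c * ‖w i‖) : Nsq v ≤ c * Nsq w := by
  unfold Nsq
  rw [show c * Real.sqrt (∑ i, ‖w i‖ ^ 2) = Real.sqrt (c ^ 2 * ∑ i, ‖w i‖ ^ 2) by
    rw [Real.sqrt_mul (by positivity), Real.sqrt_sq hc]]
  apply Real.sqrt_le_sqrt
  rw [Finset.mul_sum]
  apply Finset.sum_le_sum
  intro i _
  have := h i
  nlinarith [norm_nonneg (v i), norm_nonneg (w i)]

lemma Nsq_smul (c : ℝ) (v : Fin n → EuclideanSpace ℝ (Fin d)) :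
    Nsq (fun i => c • v i) = |c| * Nsq v := by
  unfold Nsq
  rw [show |c| * Real.sqrt (∑ i, ‖v i‖ ^ 2) = Real.sqrt (|c| ^ 2 * ∑ i, ‖v i‖ ^ 2) by
    rw [Real.sqrt_mul (by positivity), Real.sqrt_sq (abs_nonneg c)]]
  congr 1
  rw [Finset.mul_sum]
  refine Finset.sum_congr rfl fun i _ => ?_
  rw [norm_smul]
  simp [mul_pow, Real.norm_eq_abs]

lemma Nsq_le_sum (v : Fin n → EuclideanSpace ℝ (Fin d)) : Nsq v ≤ ∑ i, ‖v i‖ := by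
  unfold Nsq
  rw [show ∑ i, ‖v i‖ = Real.sqrt ((∑ i, ‖v i‖) ^ 2) from
    (Real.sqrt_sq (by positivity)).symm]
  apply Real.sqrt_le_sqrt
  exact Finset.sum_sq_le_sq_sum_of_nonneg (fun i _ => norm_nonneg _)

lemma sum_norm_le (v : Fin n → EuclideanSpace ℝ (Fin d)) :
    ∑ i, ‖v i‖ ≤ Real.sqrt n * Nsq v := by
  have h := Finset.sum_mul_sq_le_sq_mul_sq Finset.univ (fun _ : Fin n => (1:ℝ))
    (fun i => ‖v i‖)
  simp only [one_mul, one_pow, Finset.sum_const, Finset.card_univ, Fintype.card_fin,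
    nsmul_eq_mul, mul_one] at h
  have h2 : (∑ i, ‖v i‖) ≤ Real.sqrt ((n:ℝ) * ∑ i, ‖v i‖ ^ 2) := by
    rw [show (∑ i, ‖v i‖) = Real.sqrt ((∑ i, ‖v i‖)^2) from (Real.sqrt_sq (by positivity)).symm]
    exact Real.sqrt_le_sqrt h
  rw [Real.sqrt_mul (by positivity)] at h2
  exact h2

lemma Nsq_const (c : EuclideanSpace ℝ (Fin d)) :
    Nsq (fun _ : Fin n => c) = Real.sqrt n * ‖c‖ := by
  unfold Nsq
  rw [Finset.sum_const, Finset.card_univ, Fintype.card_fin, nsmul_eq_mul,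
    Real.sqrt_mul (by positivity), Real.sqrt_sq (norm_nonneg c)]

lemma Nsq_proj (v : Fin n → EuclideanSpace ℝ (Fin d)) (c : EuclideanSpace ℝ (Fin d))
    (h : ∑ i, v i = (n:ℝ) • c) :
    Nsq (fun i => v i - c) ≤ Nsq v := by
  apply Real.sqrt_le_sqrt
  have expand : ∀ i : Fin n, ‖v i - c‖ ^ 2 = ‖v i‖ ^ 2 - 2 * inner ℝ (v i) c + ‖c‖ ^ 2 :=
    fun i => norm_sub_sq_real (v i) c
  have hsum : (∑ i, inner ℝ (v i) c : ℝ) = (n:ℝ) * ‖c‖ ^ 2 := by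
    rw [← sum_inner, h, real_inner_smul_left, real_inner_self_eq_norm_sq]
  calc ∑ i, ‖v i - c‖ ^ 2 = ∑ i, (‖v i‖ ^ 2 - 2 * inner ℝ (v i) c + ‖c‖ ^ 2) :=
        Finset.sum_congr rfl fun i _ => expand i
    _ = (∑ i, ‖v i‖ ^ 2) - 2 * ((n:ℝ) * ‖c‖ ^ 2) + (n:ℝ) * ‖c‖ ^ 2 := by
        rw [Finset.sum_add_distrib, Finset.sum_sub_distrib, ← Finset.mul_sum, hsum,
          Finset.sum_const, Finset.card_univ, Fintype.card_fin, nsmul_eq_mul]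
    _ ≤ ∑ i, ‖v i‖ ^ 2 := by nlinarith [sq_nonneg ‖c‖, Nat.cast_nonneg (α := ℝ) n]

/-- eventual upper bound predicate -/
def EvLe (u : ℕ → ℝ) (A : ℝ) : Prop := ∀ ε > 0, ∀ᶠ k in atTop, u k ≤ A + ε

lemma EvLe.mono {u : ℕ → ℝ} {A B : ℝ} (h : EvLe u A) (hAB : A ≤ B) : EvLe u B := by
  intro ε hε
  filter_upwards [h ε hε] with k hk
  linarith

lemma EvLe.of_le {u : ℕ → ℝ} {A : ℝ} (h : ∀ k, u k ≤ A) : EvLe u A := by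
  intro ε hε
  filter_upwards with k
  linarith [h k]

lemma evle_limsup {u : ℕ → ℝ} {M : ℝ} (hM : ∀ k, u k ≤ M) :
    EvLe u (limsup u atTop) := by
  intro ε hε
  have hb : IsBoundedUnder (· ≤ ·) atTop u := Filter.isBoundedUnder_of ⟨M, hM⟩
  have := Filter.eventually_lt_of_limsup_lt
    (show limsup u atTop < limsup u atTop + ε by linarith) hb
  filter_upwards [this] with k hk using hk.le

lemma limsup_le_of_evle {u : ℕ → ℝ} {A : ℝ} (hnn : ∀ k, 0 ≤ u k) (h : EvLe u A) :
    limsup u atTop ≤ A := by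
  apply le_of_forall_pos_le_add
  intro ε hε
  rw [Filter.limsup_eq]
  apply csInf_le
  · refine ⟨0, fun a ha => ?_⟩
    simp only [Set.mem_setOf_eq, eventually_atTop] at ha
    obtain ⟨K, hK⟩ := ha
    exact le_trans (hnn K) (hK K le_rfl)
  · exact h ε hε

lemma limsup_nonneg' {u : ℕ → ℝ} {M : ℝ} (hnn : ∀ k, 0 ≤ u k) (hM : ∀ k, u k ≤ M) :
    0 ≤ limsup u atTop := by
  rw [Filter.limsup_eq]
  apply le_csInf
  · exact ⟨M, by filter_upwards with k using hM k⟩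
  · intro a ha
    simp only [Set.mem_setOf_eq, eventually_atTop] at ha
    obtain ⟨K, hK⟩ := ha
    exact le_trans (hnn K) (hK K le_rfl)

lemma evrec2 {u v w : ℕ → ℝ} {ρ c1 c2 dd M Qv Qw : ℝ}
    (hρ0 : 0 ≤ ρ) (hρ1 : ρ < 1) (hc1 : 0 ≤ c1) (hc2 : 0 ≤ c2)
    (hM : ∀ k, u k ≤ M)
    (hv : EvLe v Qv) (hw : EvLe w Qw)
    (hrec : ∀ k, u (k + 1) ≤ ρ * u k + c1 * v k + c2 * w k + dd) :
    EvLe u ((c1 * Qv + c2 * Qw + dd) / (1 - ρ)) := by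
  intro ε hε
  have h1ρ : 0 < 1 - ρ := by linarith
  set δ : ℝ := (1 - ρ) * ε / (2 * (c1 + c2 + 1)) with hδdef
  have hδ : 0 < δ := by positivity
  obtain ⟨K1, hK1⟩ := (eventually_atTop).1 (hv δ hδ)
  obtain ⟨K2, hK2⟩ := (eventually_atTop).1 (hw δ hδ)
  set K := max K1 K2 with hK
  set S : ℝ := (c1 * (Qv + δ) + c2 * (Qw + δ) + dd) / (1 - ρ) with hSdef
  set D : ℝ := max (M - S) 0 with hDdef
  have hD0 : 0 ≤ D := le_max_right _ _
  have key : ∀ m, u (K + m) ≤ S + ρ ^ m * D := by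
    intro m
    induction m with
    | zero =>
      simp only [pow_zero, one_mul]
      have : M - S ≤ D := le_max_left _ _
      linarith [hM (K + 0)]
    | succ m ih =>
      have hrecm := hrec (K + m)
      have hvm : v (K + m) ≤ Qv + δ := hK1 _ (le_trans (le_max_left _ _) (Nat.le_add_right _ _))
      have hwm : w (K + m) ≤ Qw + δ := hK2 _ (le_trans (le_max_right _ _) (Nat.le_add_right _ _))
      have hS : c1 * (Qv + δ) + c2 * (Qw + δ) + dd = (1 - ρ) * S := by
        rw [hSdef]; field_simp
      have : u (K + m + 1) ≤ ρ * (S + ρ ^ m * D) + (1 - ρ) * S := by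
        rw [← hS]
        have : c1 * v (K + m) ≤ c1 * (Qv + δ) := by nlinarith
        have : c2 * w (K + m) ≤ c2 * (Qw + δ) := by nlinarith
        nlinarith [mul_le_mul_of_nonneg_left ih hρ0]
      calc u (K + (m + 1)) = u (K + m + 1) := by ring_nf
        _ ≤ ρ * (S + ρ ^ m * D) + (1 - ρ) * S := this
        _ = S + ρ ^ (m + 1) * D := by ring
  have htend : Tendsto (fun m : ℕ => ρ ^ m * D) atTop (nhds 0) := by
    simpa using (tendsto_pow_atTop_nhds_zero_of_lt_one hρ0 hρ1).mul_const D
  have hev : ∀ᶠ m in atTop, ρ ^ m * D ≤ ε / 2 := by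
    filter_upwards [htend.eventually_lt_const (show (0:ℝ) < ε / 2 by linarith)] with m hm
    exact hm.le
  obtain ⟨m0, hm0⟩ := (eventually_atTop).1 hev
  rw [eventually_atTop]
  refine ⟨K + m0, fun k hk => ?_⟩
  obtain ⟨m, rfl⟩ := Nat.exists_eq_add_of_le (le_trans (Nat.le_add_right K m0) hk)
  have hmm0 : m0 ≤ m := by omega
  have h1 : u (K + m) ≤ S + ρ ^ m * D := key m
  have h2 : ρ ^ m * D ≤ ρ ^ m0 * D :=
    mul_le_mul_of_nonneg_right (pow_le_pow_of_le_one hρ0 hρ1.le hmm0) hD0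
  have h3 : ρ ^ m0 * D ≤ ε / 2 := hm0 m0 le_rfl
  have h4 : S ≤ (c1 * Qv + c2 * Qw + dd) / (1 - ρ) + ε / 2 := by
    have hS : S = (c1 * Qv + c2 * Qw + dd) / (1 - ρ) + (c1 + c2) * δ / (1 - ρ) := by
      rw [hSdef]; field_simp; ring
    have hδle : (c1 + c2) * δ / (1 - ρ) ≤ ε / 2 := by
      rw [hδdef]
      rw [div_le_iff₀ h1ρ]
      have h5 : 0 < 2 * (c1 + c2 + 1) := by linarith
      rw [mul_comm (1 - ρ) ε, ← mul_div_assoc, mul_div_assoc ((c1+c2)) _ _]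
      have : (c1 + c2) * ((ε * (1 - ρ)) / (2 * (c1 + c2 + 1))) ≤
          (c1 + c2 + 1) * ((ε * (1 - ρ)) / (2 * (c1 + c2 + 1))) := by
        apply mul_le_mul_of_nonneg_right (by linarith)
        positivity
      calc (c1 + c2) * (ε * (1 - ρ) / (2 * (c1 + c2 + 1)))
          ≤ (c1 + c2 + 1) * (ε * (1 - ρ) / (2 * (c1 + c2 + 1))) := this
        _ = ε * (1 - ρ) / 2 := by field_simp
        _ = ε / 2 * (1 - ρ) := by ring
    linarith
  linarith

end DGTaux

set_option maxHeartbeats 2000000 in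
open DGTaux in
theorem dgt_steady_state_tracking_error
    (n d : ℕ) (hn : 1 ≤ n) (hd : 1 ≤ d)
    (μ L : ℝ) (hμ : 0 < μ) (hμL : μ ≤ L)
    (f : ℕ → Fin n → EuclideanSpace ℝ (Fin d) → ℝ)
    (g : ℕ → Fin n → EuclideanSpace ℝ (Fin d) → EuclideanSpace ℝ (Fin d))
    (hgrad : ∀ k i x, HasGradientAt (f k i) (g k i x) x)
    (hsc : ∀ k i x y, (inner ℝ (g k i x - g k i y) (x - y) : ℝ) ≥ μ * ‖x - y‖ ^ 2)
    (hsm : ∀ k i x y, ‖g k i x - g k i y‖ ≤ L * ‖x - y‖)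
    (xstar : ℕ → EuclideanSpace ℝ (Fin d))
    (hopt : ∀ k, ∑ i, g k i (xstar k) = 0)
    (Δx : ℝ) (hΔx : 0 < Δx)
    (hdrift : ∀ k, ‖xstar (k + 1) - xstar k‖ ≤ Δx)
    (Δg : ℝ) (hΔg : 0 < Δg)
    (hgdrift : ∀ k, (Real.sqrt n)⁻¹ *
      ∑ i, ‖g (k + 1) i (xstar (k + 1)) - g k i (xstar k)‖ ≤ Δg)
    (W : Fin n → Fin n → ℝ)
    (hWnonneg : ∀ i j, 0 ≤ W i j)
    (hWrow : ∀ i, ∑ j, W i j = 1)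
    (hWcol : ∀ j, ∑ i, W i j = 1)
    (β : ℝ) (hβ0 : 0 ≤ β) (hβ1 : β < 1)
    (hβ : ∀ v : Fin n → EuclideanSpace ℝ (Fin d), (∑ i, v i) = 0 →
      Real.sqrt (∑ i, ‖∑ j, W i j • v j‖ ^ 2) ≤ β * Real.sqrt (∑ i, ‖v i‖ ^ 2))
    (α : ℝ) (hα0 : 0 < α) (hα : α ≤ (1 - β) ^ 2 * μ / (768 * L ^ 2))
    (x y : ℕ → Fin n → EuclideanSpace ℝ (Fin d))
    (hy0 : ∀ i, y 0 i = g 0 i (x 0 i))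
    (hx : ∀ k i, x (k + 1) i = ∑ j, W i j • (x k j - α • y k j))
    (hy : ∀ k i, y (k + 1) i =
      (∑ j, W i j • y k j) + g (k + 1) i (x (k + 1) i) - g k i (x k i)) :
    Filter.limsup
      (fun k => (Real.sqrt n)⁻¹ * Real.sqrt (∑ i, ‖x k i - xstar k‖ ^ 2))
      Filter.atTop ≤
      (4 / (α * μ) + 40 * β * L / ((1 - β) ^ 2 * μ)) * Δx
      + 16 * α * β * L * Δg / ((1 - β) ^ 2 * μ) := by

  classical
  -- basic positivity facts
  have hL : 0 < L := lt_of_lt_of_le hμ hμL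
  have hn0 : (0:ℝ) < n := by exact_mod_cast Nat.cast_pos.mpr (by omega)
  have hn0' : ((n:ℝ)) ≠ 0 := ne_of_gt hn0
  obtain ⟨sqn, hsqndef⟩ : ∃ t : ℝ, t = Real.sqrt n := ⟨_, rfl⟩
  have hsqn1 : 1 ≤ sqn := by
    rw [hsqndef, show (1:ℝ) = Real.sqrt 1 by simp]
    exact Real.sqrt_le_sqrt (by exact_mod_cast hn)
  have hsqn0 : 0 < sqn := lt_of_lt_of_le one_pos hsqn1
  have hsqnsq : sqn * sqn = n := by rw [hsqndef]; exact Real.mul_self_sqrt hn0.le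
  obtain ⟨γ, hγdef⟩ : ∃ t : ℝ, t = 1 - β := ⟨_, rfl⟩
  have hγ0 : 0 < γ := by rw [hγdef]; linarith
  have hγ1 : γ ≤ 1 := by rw [hγdef]; linarith
  have hβ1' : β ≤ 1 := hβ1.le
  -- step-size facts
  have hkey : 768 * α * L^2 ≤ γ^2 * μ := by
    have h768 : (0:ℝ) < 768 * L^2 := by positivity
    have h2 : α * (768 * L^2) ≤ (1-β)^2*μ / (768*L^2) * (768*L^2) :=
      mul_le_mul_of_nonneg_right hα h768.le
    rw [div_mul_cancel₀ _ (ne_of_gt h768)] at h2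
    rw [hγdef]; nlinarith only [h2]
  have hαL : α * L ≤ γ^2 / 768 := by
    have h1 : (α * L * 768) * L ≤ γ^2 * L := by
      nlinarith only [hkey, mul_le_mul_of_nonneg_left hμL (sq_nonneg γ)]
    have h2 : α * L * 768 ≤ γ^2 := le_of_mul_le_mul_right h1 hL
    linarith
  have hαμαL : α * μ ≤ α * L := mul_le_mul_of_nonneg_left hμL hα0.le
  have hαμ : α * μ ≤ γ^2 / 768 := le_trans hαμαL hαL
  have hαμ0 : 0 < α * μ := mul_pos hα0 hμ
  have hγγ : γ^2 ≤ 1 := by nlinarith only [hγ0, hγ1]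
  have hγsq : γ^2 ≤ γ := by nlinarith only [hγ0, hγ1]
  have hαμ1 : α * μ ≤ 1 := by linarith
  have hαL1 : α * L ≤ 1 := by linarith
  have hαLγ : α * L ≤ γ/2 := by linarith
  have hαμγ : α * μ ≤ γ := by linarith
  have hαL2μ : α * L^2 ≤ μ := by
    have t1 : (1-γ^2)*μ ≥ 0 := mul_nonneg (by linarith) hμ.le
    have t2 : 0 ≤ α*L^2 := by positivity
    nlinarith only [hkey, t1, t2]
  -- means and error sequences
  obtain ⟨xbar, hxbardef⟩ : ∃ t : ℕ → EuclideanSpace ℝ (Fin d),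
    t = fun k => (n:ℝ)⁻¹ • ∑ i, x k i := ⟨_, rfl⟩
  obtain ⟨ybar, hybardef⟩ : ∃ t : ℕ → EuclideanSpace ℝ (Fin d),
    t = fun k => (n:ℝ)⁻¹ • ∑ i, y k i := ⟨_, rfl⟩
  obtain ⟨p, hpdef⟩ : ∃ t : ℕ → ℝ, t = fun k => Nsq (fun i => x k i - xbar k) := ⟨_, rfl⟩
  obtain ⟨q, hqdef⟩ : ∃ t : ℕ → ℝ, t = fun k => Nsq (fun i => y k i - ybar k) := ⟨_, rfl⟩
  obtain ⟨r, hrdef⟩ : ∃ t : ℕ → ℝ, t = fun k => sqn * ‖xbar k - xstar k‖ := ⟨_, rfl⟩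
  obtain ⟨s, hsdef⟩ : ∃ t : ℕ → ℝ, t = fun k => Nsq (fun i => x k i - xstar k) := ⟨_, rfl⟩
  obtain ⟨E1, hE1def⟩ : ∃ t : ℝ, t = sqn * Δx := ⟨_, rfl⟩
  obtain ⟨E2, hE2def⟩ : ∃ t : ℝ, t = sqn * Δg := ⟨_, rfl⟩
  have hE10 : 0 ≤ E1 := by rw [hE1def]; positivity
  have hE20 : 0 ≤ E2 := by rw [hE2def]; positivity
  have hp0 : ∀ k, 0 ≤ p k := fun k => by rw [hpdef]; exact Nsq_nonneg _
  have hq0 : ∀ k, 0 ≤ q k := fun k => by rw [hqdef]; exact Nsq_nonneg _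
  have hs0 : ∀ k, 0 ≤ s k := fun k => by rw [hsdef]; exact Nsq_nonneg _
  have hr0 : ∀ k, 0 ≤ r k := fun k => by
    rw [hrdef]; exact mul_nonneg hsqn0.le (norm_nonneg _)
  -- matrix helpers
  have rowW : ∀ (i : Fin n) (c : EuclideanSpace ℝ (Fin d)), ∑ j, W i j • c = c := by
    intro i c; rw [← Finset.sum_smul, hWrow i, one_smul]
  have colW : ∀ (v : Fin n → EuclideanSpace ℝ (Fin d)),
      ∑ i, ∑ j, W i j • v j = ∑ j, v j := by
    intro v
    rw [Finset.sum_comm]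
    refine Finset.sum_congr rfl fun j _ => ?_
    rw [← Finset.sum_smul, hWcol j, one_smul]
  have hmean0 : ∀ v : Fin n → EuclideanSpace ℝ (Fin d),
      ∑ i, (v i - (n:ℝ)⁻¹ • ∑ j, v j) = 0 := by
    intro v
    rw [Finset.sum_sub_distrib, Finset.sum_const, Finset.card_univ, Fintype.card_fin,
      ← Nat.cast_smul_eq_nsmul ℝ, smul_smul, mul_inv_cancel₀ hn0', one_smul, sub_self]
  have hxsum0 : ∀ k, ∑ i, (x k i - xbar k) = 0 := by
    intro k; simp only [hxbardef]; exact hmean0 (x k)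
  have hysum0 : ∀ k, ∑ i, (y k i - ybar k) = 0 := by
    intro k; simp only [hybardef]; exact hmean0 (y k)
  -- sum dynamics
  have sum_x' : ∀ k, ∑ i, x (k+1) i = (∑ j, x k j) - α • ∑ j, y k j := by
    intro k
    calc ∑ i, x (k+1) i = ∑ i, ∑ j, W i j • (x k j - α • y k j) :=
          Finset.sum_congr rfl fun i _ => hx k i
      _ = ∑ j, (x k j - α • y k j) := colW _
      _ = (∑ j, x k j) - α • ∑ j, y k j := by
          rw [Finset.sum_sub_distrib, Finset.smul_sum]
  have xbar_rec : ∀ k, xbar (k+1) = xbar k - α • ybar k := by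
    intro k
    simp only [hxbardef, hybardef]
    rw [sum_x' k, smul_sub, smul_comm]
  -- R1 : consensus recursion
  have hR1 : ∀ k, p (k+1) ≤ β * p k + α * β * q k := by
    intro k
    obtain ⟨v, hvdef⟩ : ∃ t : Fin n → EuclideanSpace ℝ (Fin d),
      t = fun j => (x k j - xbar k) - α • (y k j - ybar k) := ⟨_, rfl⟩
    have hv0 : ∑ j, v j = 0 := by
      simp only [hvdef]
      rw [Finset.sum_sub_distrib, ← Finset.smul_sum, hxsum0 k, hysum0 k, smul_zero, sub_zero]
    have hxid : ∀ i, x (k+1) i - xbar (k+1) = ∑ j, W i j • v j := by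
      intro i
      have e1 : ∀ j, x k j - α • y k j = v j + (xbar k - α • ybar k) := by
        intro j; simp only [hvdef]; simp only [smul_sub]; abel
      have e2 : ∑ j, W i j • (x k j - α • y k j)
          = (∑ j, W i j • v j) + (xbar k - α • ybar k) := by
        calc ∑ j, W i j • (x k j - α • y k j)
            = ∑ j, (W i j • v j + W i j • (xbar k - α • ybar k)) := by
              refine Finset.sum_congr rfl fun j _ => ?_; rw [e1 j, smul_add]
          _ = (∑ j, W i j • v j) + (xbar k - α • ybar k) := by
              rw [Finset.sum_add_distrib, rowW i _]
      rw [hx k i, e2, xbar_rec k]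
      abel
    have hple : p (k+1) = Nsq (fun i => ∑ j, W i j • v j) := by
      simp only [hpdef]
      congr 1
      funext i
      exact hxid i
    have hcontr : Nsq (fun i => ∑ j, W i j • v j) ≤ β * Nsq v := hβ v hv0
    have hveq : v = fun j => (x k j - xbar k) + (-α) • (y k j - ybar k) := by
      funext j; simp only [hvdef]; rw [neg_smul]; abel
    have htri : Nsq v ≤ p k + α * q k := by
      rw [hveq]
      calc Nsq (fun j => (x k j - xbar k) + (-α) • (y k j - ybar k))
          ≤ Nsq (fun j => x k j - xbar k) + Nsq (fun j => (-α) • (y k j - ybar k)) :=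
            Nsq_add_le _ _
        _ = p k + α * q k := by
            rw [Nsq_smul, abs_neg, abs_of_pos hα0, hpdef, hqdef]
    calc p (k+1) = Nsq (fun i => ∑ j, W i j • v j) := hple
      _ ≤ β * Nsq v := hcontr
      _ ≤ β * (p k + α * q k) := mul_le_mul_of_nonneg_left htri hβ0
      _ = β * p k + α * β * q k := by ring

  -- R2 : optimality-gap recursion
  have hsumy : ∀ k, ∑ i, y k i = ∑ i, g k i (x k i) := by
    intro k
    induction k with
    | zero => exact Finset.sum_congr rfl fun i _ => hy0 i
    | succ k ih =>
      calc ∑ i, y (k+1) i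
          = ∑ i, ((∑ j, W i j • y k j) + g (k+1) i (x (k+1) i) - g k i (x k i)) :=
            Finset.sum_congr rfl fun i _ => hy k i
        _ = (∑ i, ∑ j, W i j • y k j) + ∑ i, g (k+1) i (x (k+1) i)
              - ∑ i, g k i (x k i) := by
            rw [Finset.sum_sub_distrib, Finset.sum_add_distrib]
        _ = ∑ i, g (k+1) i (x (k+1) i) := by rw [colW, ih]; abel
  have hsum_norm_p : ∀ k, ∑ i, ‖x k i - xbar k‖ ≤ sqn * p k := by
    intro k
    have := sum_norm_le (fun i => x k i - xbar k)
    rw [← hsqndef] at this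
    simp only [hpdef]
    exact this
  have hR2 : ∀ k, r (k+1) ≤ (1 - α*μ/2) * r k + α*L * p k + E1 := by
    intro k
    obtain ⟨u, hudef⟩ : ∃ t : EuclideanSpace ℝ (Fin d), t = xbar k - xstar k := ⟨_, rfl⟩
    obtain ⟨hh, hhdef⟩ : ∃ t : EuclideanSpace ℝ (Fin d),
      t = (n:ℝ)⁻¹ • ∑ i, g k i (xbar k) := ⟨_, rfl⟩
    -- strong monotonicity of the averaged gradient
    have hsumdiff : ∑ i, (g k i (xbar k) - g k i (xstar k)) = (n:ℝ) • hh := by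
      rw [Finset.sum_sub_distrib, hopt k, sub_zero, hhdef, smul_smul,
        mul_inv_cancel₀ hn0', one_smul]
    have hmono : (inner ℝ hh u : ℝ) ≥ μ * ‖u‖^2 := by
      have h1 : (inner ℝ (∑ i, (g k i (xbar k) - g k i (xstar k))) u : ℝ)
          ≥ ∑ _i : Fin n, μ * ‖u‖^2 := by
        rw [sum_inner]
        apply Finset.sum_le_sum
        intro i _
        have := hsc k i (xbar k) (xstar k)
        rw [← hudef] at this
        exact this
      rw [hsumdiff, real_inner_smul_left] at h1
      simp only [Finset.sum_const, Finset.card_univ, Fintype.card_fin, nsmul_eq_mul] at h1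
      have h2 : (0:ℝ) < (n:ℝ) := hn0
      nlinarith only [h1, h2]
    have hnormh : ‖hh‖ ≤ L * ‖u‖ := by
      have h1 : hh = (n:ℝ)⁻¹ • ∑ i, (g k i (xbar k) - g k i (xstar k)) := by
        rw [hsumdiff, smul_smul, inv_mul_cancel₀ hn0', one_smul]
      rw [h1, norm_smul]
      have h2 : ‖∑ i, (g k i (xbar k) - g k i (xstar k))‖ ≤ (n:ℝ) * (L * ‖u‖) := by
        calc ‖∑ i, (g k i (xbar k) - g k i (xstar k))‖
            ≤ ∑ i, ‖g k i (xbar k) - g k i (xstar k)‖ := norm_sum_le _ _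
          _ ≤ ∑ _i : Fin n, L * ‖u‖ := by
              apply Finset.sum_le_sum
              intro i _
              have := hsm k i (xbar k) (xstar k)
              rw [← hudef] at this
              exact this
          _ = (n:ℝ) * (L * ‖u‖) := by
              rw [Finset.sum_const, Finset.card_univ, Fintype.card_fin, nsmul_eq_mul]
      calc ‖(n:ℝ)⁻¹‖ * ‖∑ i, (g k i (xbar k) - g k i (xstar k))‖
          ≤ ‖(n:ℝ)⁻¹‖ * ((n:ℝ) * (L * ‖u‖)) :=
            mul_le_mul_of_nonneg_left h2 (norm_nonneg _)
        _ = L * ‖u‖ := by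
            rw [Real.norm_eq_abs, abs_of_pos (by positivity)]
            field_simp
    -- contraction
    have hαμ2 : 0 ≤ 1 - α*μ/2 := by linarith
    have hcon : ‖u - α • hh‖ ≤ (1 - α*μ/2) * ‖u‖ := by
      have hsq : ‖u - α • hh‖^2 ≤ ((1 - α*μ/2) * ‖u‖)^2 := by
        have e1 : ‖u - α • hh‖^2 = ‖u‖^2 - 2*α*(inner ℝ u hh : ℝ) + α^2*‖hh‖^2 := by
          rw [norm_sub_sq_real, real_inner_smul_right, norm_smul, Real.norm_eq_abs,
            abs_of_pos hα0, mul_pow]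
          ring
        have e2 : (inner ℝ u hh : ℝ) ≥ μ * ‖u‖^2 := by rw [real_inner_comm]; exact hmono
        have e3 : α^2*‖hh‖^2 ≤ α^2*(L*‖u‖)^2 := by
          apply mul_le_mul_of_nonneg_left _ (sq_nonneg α)
          exact pow_le_pow_left₀ (norm_nonneg _) hnormh 2
        have e4 : α^2*(L*‖u‖)^2 ≤ α*μ*‖u‖^2 := by
          have : α^2*(L*‖u‖)^2 = (α*L^2)*(α*‖u‖^2) := by ring
          rw [this]
          have h5 : (α*L^2)*(α*‖u‖^2) ≤ μ*(α*‖u‖^2) :=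
            mul_le_mul_of_nonneg_right hαL2μ (by positivity)
          calc (α*L^2)*(α*‖u‖^2) ≤ μ*(α*‖u‖^2) := h5
            _ = α*μ*‖u‖^2 := by ring
        nlinarith only [e1, e2, e3, e4, hα0, sq_nonneg ‖u‖, norm_nonneg u, hαμ0, hαμ1,
          sq_nonneg (α*μ*‖u‖)]
      have h6 := Real.sqrt_le_sqrt hsq
      rwa [Real.sqrt_sq (norm_nonneg _), Real.sqrt_sq (by positivity)] at h6
    -- distance from average gradient to tracked average
    have hyb : ‖ybar k - hh‖ ≤ L * (p k / sqn) := by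
      have h1 : ybar k - hh = (n:ℝ)⁻¹ • ∑ i, (g k i (x k i) - g k i (xbar k)) := by
        simp only [hybardef, hhdef]
        rw [hsumy k, Finset.sum_sub_distrib, smul_sub]
      rw [h1, norm_smul]
      have h2 : ‖∑ i, (g k i (x k i) - g k i (xbar k))‖ ≤ L * (sqn * p k) := by
        calc ‖∑ i, (g k i (x k i) - g k i (xbar k))‖
            ≤ ∑ i, ‖g k i (x k i) - g k i (xbar k)‖ := norm_sum_le _ _
          _ ≤ ∑ i, L * ‖x k i - xbar k‖ :=
              Finset.sum_le_sum fun i _ => hsm k i (x k i) (xbar k)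
          _ = L * ∑ i, ‖x k i - xbar k‖ := by rw [Finset.mul_sum]
          _ ≤ L * (sqn * p k) := mul_le_mul_of_nonneg_left (hsum_norm_p k) hL.le
      calc ‖(n:ℝ)⁻¹‖ * ‖∑ i, (g k i (x k i) - g k i (xbar k))‖
          ≤ ‖(n:ℝ)⁻¹‖ * (L * (sqn * p k)) := mul_le_mul_of_nonneg_left h2 (norm_nonneg _)
        _ = L * (p k / sqn) := by
            rw [Real.norm_eq_abs, abs_of_pos (by positivity)]
            rw [show ((n:ℝ))⁻¹ * (L * (sqn * p k)) = L * (sqn * p k / n) by ring]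
            congr 1
            rw [← hsqnsq]
            field_simp
    -- assemble
    have hdecomp : xbar (k+1) - xstar (k+1)
        = (u - α • hh) + ((-α) • (ybar k - hh) + (xstar k - xstar (k+1))) := by
      rw [xbar_rec k, hudef, neg_smul, smul_sub]
      abel
    have hnorm1 : ‖xbar (k+1) - xstar (k+1)‖
        ≤ (1 - α*μ/2) * ‖u‖ + (α * (L * (p k / sqn)) + Δx) := by
      rw [hdecomp]
      have t1 : ‖(-α) • (ybar k - hh)‖ ≤ α * (L * (p k / sqn)) := by
        rw [norm_smul, Real.norm_eq_abs, abs_neg, abs_of_pos hα0]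
        exact mul_le_mul_of_nonneg_left hyb hα0.le
      have t2 : ‖xstar k - xstar (k+1)‖ ≤ Δx := by
        rw [norm_sub_rev]; exact hdrift k
      calc ‖(u - α • hh) + ((-α) • (ybar k - hh) + (xstar k - xstar (k+1)))‖
          ≤ ‖u - α • hh‖ + ‖(-α) • (ybar k - hh) + (xstar k - xstar (k+1))‖ :=
            norm_add_le _ _
        _ ≤ ‖u - α • hh‖ + (‖(-α) • (ybar k - hh)‖ + ‖xstar k - xstar (k+1)‖) := by
            have := norm_add_le ((-α) • (ybar k - hh)) (xstar k - xstar (k+1))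
            linarith
        _ ≤ (1 - α*μ/2) * ‖u‖ + (α * (L * (p k / sqn)) + Δx) := by
            linarith [hcon, t1, t2]
    have hrk1 : r (k+1) = sqn * ‖xbar (k+1) - xstar (k+1)‖ := by rw [hrdef]
    have hrk : r k = sqn * ‖u‖ := by rw [hrdef, hudef]
    rw [hrk1]
    have h7 : sqn * ‖xbar (k+1) - xstar (k+1)‖
        ≤ sqn * ((1 - α*μ/2) * ‖u‖ + (α * (L * (p k / sqn)) + Δx)) :=
      mul_le_mul_of_nonneg_left hnorm1 hsqn0.le
    have h8 : sqn * ((1 - α*μ/2) * ‖u‖ + (α * (L * (p k / sqn)) + Δx))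
        = (1 - α*μ/2) * (sqn * ‖u‖) + α*L*p k + sqn * Δx := by
      field_simp
      ring
    rw [h8] at h7
    rw [← hrk] at h7
    rw [hE1def]
    exact h7

  -- s ≤ p + r
  have hsle : ∀ k, s k ≤ p k + r k := by
    intro k
    have heq : (fun i => x k i - xstar k)
        = fun i : Fin n => (x k i - xbar k) + (xbar k - xstar k) := by
      funext i; exact (sub_add_sub_cancel _ _ _).symm
    simp only [hsdef]
    rw [heq]
    calc Nsq (fun i : Fin n => (x k i - xbar k) + (xbar k - xstar k))
        ≤ Nsq (fun i => x k i - xbar k) + Nsq (fun _ : Fin n => xbar k - xstar k) :=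
          Nsq_add_le _ _
      _ = p k + r k := by
          rw [Nsq_const, ← hsqndef, hpdef, hrdef]
  -- R3' : raw tracking recursion
  have hR3' : ∀ k, q (k+1) ≤ β * q k + (L * s (k+1) + (E2 + L * s k)) := by
    intro k
    obtain ⟨Dl, hDldef⟩ : ∃ t : Fin n → EuclideanSpace ℝ (Fin d),
      t = fun i => g (k+1) i (x (k+1) i) - g k i (x k i) := ⟨_, rfl⟩
    have hysum' : ∑ i, y (k+1) i = (∑ i, y k i) + ∑ i, Dl i := by
      calc ∑ i, y (k+1) i
          = ∑ i, ((∑ j, W i j • y k j) + g (k+1) i (x (k+1) i) - g k i (x k i)) :=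
            Finset.sum_congr rfl fun i _ => hy k i
        _ = (∑ i, ∑ j, W i j • y k j) + ∑ i, g (k+1) i (x (k+1) i)
              - ∑ i, g k i (x k i) := by
            rw [Finset.sum_sub_distrib, Finset.sum_add_distrib]
        _ = (∑ i, y k i) + ∑ i, Dl i := by
            rw [colW, hDldef, Finset.sum_sub_distrib]
            abel
    have hybar' : ybar (k+1) = ybar k + (n:ℝ)⁻¹ • ∑ i, Dl i := by
      simp only [hybardef]
      rw [hysum', smul_add]
    have hyid : ∀ i, y (k+1) i - ybar (k+1)
        = (∑ j, W i j • (y k j - ybar k)) + (Dl i - (n:ℝ)⁻¹ • ∑ j, Dl j) := by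
      intro i
      have e : ∑ j, W i j • (y k j - ybar k) = (∑ j, W i j • y k j) - ybar k := by
        calc ∑ j, W i j • (y k j - ybar k)
            = ∑ j, (W i j • y k j - W i j • ybar k) :=
              Finset.sum_congr rfl fun j _ => smul_sub _ _ _
          _ = (∑ j, W i j • y k j) - ∑ j, W i j • ybar k := Finset.sum_sub_distrib _ _
          _ = (∑ j, W i j • y k j) - ybar k := by rw [rowW]
      rw [hy k i, hybar', e, hDldef]
      beta_reduce
      abel
    have hq1 : q (k+1) ≤ β * q k + Nsq Dl := by
      have heq : (fun i => y (k+1) i - ybar (k+1))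
          = fun i : Fin n => (∑ j, W i j • (y k j - ybar k))
              + (Dl i - (n:ℝ)⁻¹ • ∑ j, Dl j) := funext hyid
      simp only [hqdef]
      rw [heq]
      have t1 : Nsq (fun i : Fin n => ∑ j, W i j • (y k j - ybar k))
          ≤ β * Nsq (fun j => y k j - ybar k) := hβ _ (hysum0 k)
      have t2 : Nsq (fun i : Fin n => Dl i - (n:ℝ)⁻¹ • ∑ j, Dl j) ≤ Nsq Dl := by
        apply Nsq_proj
        rw [smul_smul, mul_inv_cancel₀ hn0', one_smul]
      calc Nsq (fun i : Fin n => (∑ j, W i j • (y k j - ybar k))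
              + (Dl i - (n:ℝ)⁻¹ • ∑ j, Dl j))
          ≤ Nsq (fun i : Fin n => ∑ j, W i j • (y k j - ybar k))
            + Nsq (fun i : Fin n => Dl i - (n:ℝ)⁻¹ • ∑ j, Dl j) := Nsq_add_le _ _
        _ ≤ β * Nsq (fun j => y k j - ybar k) + Nsq Dl := by linarith [t1, t2]
    have hDle : Nsq Dl ≤ L * s (k+1) + (E2 + L * s k) := by
      have hsplit : Dl = fun i : Fin n =>
          (g (k+1) i (x (k+1) i) - g (k+1) i (xstar (k+1)))
          + ((g (k+1) i (xstar (k+1)) - g k i (xstar k))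
             + (g k i (xstar k) - g k i (x k i))) := by
        funext i; rw [hDldef]; abel
      rw [hsplit]
      have tA : Nsq (fun i : Fin n => g (k+1) i (x (k+1) i) - g (k+1) i (xstar (k+1)))
          ≤ L * s (k+1) := by
        simp only [hsdef]
        exact Nsq_mono hL.le _ _ (fun i => hsm (k+1) i (x (k+1) i) (xstar (k+1)))
      have tB : Nsq (fun i : Fin n => g (k+1) i (xstar (k+1)) - g k i (xstar k)) ≤ E2 := by
        have h1 := Nsq_le_sum (fun i : Fin n => g (k+1) i (xstar (k+1)) - g k i (xstar k))
        have h2 := hgdrift k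
        have h3 : ∑ i, ‖g (k+1) i (xstar (k+1)) - g k i (xstar k)‖ ≤ sqn * Δg := by
          have h4 : sqn * ((Real.sqrt n)⁻¹
              * ∑ i, ‖g (k+1) i (xstar (k+1)) - g k i (xstar k)‖) ≤ sqn * Δg :=
            mul_le_mul_of_nonneg_left h2 hsqn0.le
          rw [← hsqndef] at h4
          rw [← mul_assoc, mul_inv_cancel₀ (ne_of_gt hsqn0), one_mul] at h4
          exact h4
        rw [hE2def]
        linarith
      have tC : Nsq (fun i : Fin n => g k i (xstar k) - g k i (x k i)) ≤ L * s k := by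
        simp only [hsdef]
        apply Nsq_mono hL.le
        intro i
        rw [norm_sub_rev (x k i) (xstar k)]
        exact hsm k i (xstar k) (x k i)
      calc Nsq (fun i : Fin n =>
              (g (k+1) i (x (k+1) i) - g (k+1) i (xstar (k+1)))
              + ((g (k+1) i (xstar (k+1)) - g k i (xstar k))
                 + (g k i (xstar k) - g k i (x k i))))
          ≤ Nsq (fun i : Fin n => g (k+1) i (x (k+1) i) - g (k+1) i (xstar (k+1)))
            + Nsq (fun i : Fin n => (g (k+1) i (xstar (k+1)) - g k i (xstar k))
                 + (g k i (xstar k) - g k i (x k i))) := Nsq_add_le _ _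
        _ ≤ Nsq (fun i : Fin n => g (k+1) i (x (k+1) i) - g (k+1) i (xstar (k+1)))
            + (Nsq (fun i : Fin n => g (k+1) i (xstar (k+1)) - g k i (xstar k))
               + Nsq (fun i : Fin n => g k i (xstar k) - g k i (x k i))) := by
            linarith [Nsq_add_le (fun i : Fin n => g (k+1) i (xstar (k+1)) - g k i (xstar k))
              (fun i : Fin n => g k i (xstar k) - g k i (x k i))]
        _ ≤ L * s (k+1) + (E2 + L * s k) := by linarith [tA, tB, tC]
    linarith [hq1, hDle]
  -- R3 : tracking recursion in closed form
  have hR3 : ∀ k, q (k+1) ≤ (β + α*L) * q k + 3*L * p k + 2*L * r k + (L*E1 + E2) := by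
    intro k
    have h1 := hR3' k
    have h2 := hsle k
    have h3 := hsle (k+1)
    have h4 := hR1 k
    have h5 := hR2 k
    have hLs1 : L * s (k+1) ≤ L * (p (k+1) + r (k+1)) :=
      mul_le_mul_of_nonneg_left h3 hL.le
    have hLs0 : L * s k ≤ L * (p k + r k) := mul_le_mul_of_nonneg_left h2 hL.le
    have hLp1 : L * p (k+1) ≤ L * (β * p k + α * β * q k) :=
      mul_le_mul_of_nonneg_left h4 hL.le
    have hLr1 : L * r (k+1) ≤ L * ((1 - α*μ/2) * r k + α*L * p k + E1) :=
      mul_le_mul_of_nonneg_left h5 hL.le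
    -- nonlinear comparisons
    have c1 : L * (α * β * q k) ≤ α * L * q k := by
      have : (1 - β) * (α * L * q k) ≥ 0 :=
        mul_nonneg (by linarith) (mul_nonneg (mul_nonneg hα0.le hL.le) (hq0 k))
      nlinarith only [this]
    have c2 : L * (β * p k) ≤ L * p k := by
      have : (1 - β) * (L * p k) ≥ 0 :=
        mul_nonneg (by linarith) (mul_nonneg hL.le (hp0 k))
      nlinarith only [this]
    have c3 : L * (α * L * p k) ≤ L * p k := by
      have : (1 - α*L) * (L * p k) ≥ 0 :=
        mul_nonneg (by linarith) (mul_nonneg hL.le (hp0 k))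
      nlinarith only [this]
    have c4 : L * ((1 - α*μ/2) * r k) ≤ L * r k := by
      have : (α*μ/2) * (L * r k) ≥ 0 :=
        mul_nonneg (by positivity) (mul_nonneg hL.le (hr0 k))
      nlinarith only [this]
    nlinarith only [h1, hLs1, hLs0, hLp1, hLr1, c1, c2, c3, c4]

  -- Lyapunov boundedness
  obtain ⟨aa, haadef⟩ : ∃ t : ℝ, t = 4*α*L/γ := ⟨_, rfl⟩
  obtain ⟨bb, hbbdef⟩ : ∃ t : ℝ, t = α*μ/(8*L) := ⟨_, rfl⟩
  have haa0 : 0 < aa := by rw [haadef]; exact div_pos (by positivity) hγ0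
  have hbb0 : 0 < bb := by rw [hbbdef]; positivity
  have haaγ : aa * γ = 4*(α*L) := by
    rw [haadef]; field_simp
  have hbbL : bb * L = α*μ/8 := by
    rw [hbbdef]; field_simp
  obtain ⟨ρ, hρdef⟩ : ∃ t : ℝ, t = 1 - α*μ/4 := ⟨_, rfl⟩
  have hρ0 : 0 ≤ ρ := by rw [hρdef]; linarith
  have hρ1 : ρ < 1 := by rw [hρdef]; linarith
  obtain ⟨CC, hCCdef⟩ : ∃ t : ℝ, t = (1 + bb*L)*E1 + bb*E2 := ⟨_, rfl⟩
  -- coefficient inequalities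
  have hc_r : (1 - α*μ/2) + 2*(bb*L) ≤ ρ := by rw [hbbL, hρdef]; linarith
  have hc_p : α*L + aa*β + 3*(bb*L) ≤ ρ*aa := by
    have h1 : aa*(α*μ) ≤ 4*(α*L) := by
      calc aa*(α*μ) ≤ aa*γ := mul_le_mul_of_nonneg_left hαμγ haa0.le
        _ = 4*(α*L) := haaγ
    have h2 : aa*β = aa - aa*γ := by rw [hγdef]; ring
    have h4 : ρ*aa = aa - aa*(α*μ)/4 := by rw [hρdef]; ring
    rw [hbbL, h4, h2, haaγ]
    linarith [hαμαL]
  have hc_q : aa*(α*β) + bb*(β + α*L) ≤ ρ*bb := by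
    have hgap : (ρ*bb - (aa*(α*β) + bb*(β + α*L))) * (8*L*γ) =
        α*(μ*γ^2 - (32*α*β*L^2 + μ*(α*L)*γ + μ*(α*μ)*γ/4)) := by
      have hγne : γ ≠ 0 := ne_of_gt hγ0
      have hLne : L ≠ 0 := ne_of_gt hL
      rw [hρdef, haadef, hbbdef, show β = 1 - γ from by rw [hγdef]; ring]
      field_simp
      ring
    have hscaled : 32*α*β*L^2 + μ*(α*L)*γ + μ*(α*μ)*γ/4 ≤ μ*γ^2 := by
      have t1 : 32*α*β*L^2 ≤ 32*(α*L^2) := by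
        have : (1-β)*(32*(α*L^2)) ≥ 0 :=
          mul_nonneg (by linarith) (by positivity)
        nlinarith only [this]
      have t1' : 32*(α*L^2) ≤ 32*(γ^2*μ)/768 := by nlinarith only [hkey]
      have t2 : μ*(α*L)*γ ≤ μ*(γ^2/768) := by
        have h5 : (α*L)*γ ≤ (γ^2/768)*1 :=
          mul_le_mul hαL hγ1 hγ0.le (by positivity)
        have := mul_le_mul_of_nonneg_left h5 hμ.le
        nlinarith only [this]
      have t3 : μ*(α*μ)*γ/4 ≤ μ*(γ^2/768) := by
        have h5 : (α*μ)*γ ≤ (γ^2/768)*1 :=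
          mul_le_mul hαμ hγ1 hγ0.le (by positivity)
        have := mul_le_mul_of_nonneg_left h5 hμ.le
        nlinarith only [this, hμ, sq_nonneg γ]
      have t4 : 32*(γ^2*μ)/768 + μ*(γ^2/768) + μ*(γ^2/768) ≤ μ*γ^2 := by nlinarith only [hμ, sq_nonneg γ, mul_nonneg (sq_nonneg γ) hμ.le]
      linarith
    have h8 : (0:ℝ) < 8*L*γ := by positivity
    nlinarith only [hgap, hscaled, hα0, h8, mul_pos hα0
      (show (0:ℝ) < 1 by norm_num)]
  -- Lyapunov recursion
  obtain ⟨V, hVdef⟩ : ∃ t : ℕ → ℝ, t = fun k => r k + aa * p k + bb * q k := ⟨_, rfl⟩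
  have hVrec : ∀ k, V (k+1) ≤ ρ * V k + CC := by
    intro k
    have h4 := hR1 k
    have h5 := hR2 k
    have h6 := hR3 k
    have hA := mul_le_mul_of_nonneg_left h4 haa0.le
    have hB := mul_le_mul_of_nonneg_left h6 hbb0.le
    have e1 := mul_le_mul_of_nonneg_right hc_p (hp0 k)
    have e2 := mul_le_mul_of_nonneg_right hc_q (hq0 k)
    have e3 := mul_le_mul_of_nonneg_right hc_r (hr0 k)
    simp only [hVdef, hCCdef]
    nlinarith only [h5, hA, hB, e1, e2, e3]
  have hCC0 : 0 ≤ CC := by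
    rw [hCCdef]
    have : 0 ≤ bb*L := by positivity
    nlinarith only [hE10, hE20, hbb0, this]
  obtain ⟨BB, hBBdef⟩ : ∃ t : ℝ, t = max (V 0) (4*CC/(α*μ)) := ⟨_, rfl⟩
  have hVB : ∀ k, V k ≤ BB := by
    intro k
    induction k with
    | zero => rw [hBBdef]; exact le_max_left _ _
    | succ k ih =>
      have h1 := hVrec k
      have h2 : ρ * V k ≤ ρ * BB := mul_le_mul_of_nonneg_left ih hρ0
      have h4 : 4*CC/(α*μ) ≤ BB := by rw [hBBdef]; exact le_max_right _ _
      have h5 : 4*CC ≤ BB*(α*μ) := by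
        rw [div_le_iff₀ hαμ0] at h4; linarith
      have h6 : ρ * BB + CC ≤ BB := by
        rw [hρdef]
        nlinarith only [h5]
      linarith
  have hpB : ∀ k, p k ≤ BB/aa := by
    intro k
    rw [le_div_iff₀ haa0]
    have h1 := hVB k
    simp only [hVdef] at h1
    have h2 : 0 ≤ bb * q k := mul_nonneg hbb0.le (hq0 k)
    nlinarith only [h1, h2, hr0 k]
  have hqB : ∀ k, q k ≤ BB/bb := by
    intro k
    rw [le_div_iff₀ hbb0]
    have h1 := hVB k
    simp only [hVdef] at h1
    have h2 : 0 ≤ aa * p k := mul_nonneg haa0.le (hp0 k)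
    nlinarith only [h1, h2, hr0 k]
  have hrB : ∀ k, r k ≤ BB := by
    intro k
    have h1 := hVB k
    simp only [hVdef] at h1
    have h2 : 0 ≤ aa * p k := mul_nonneg haa0.le (hp0 k)
    have h3 : 0 ≤ bb * q k := mul_nonneg hbb0.le (hq0 k)
    nlinarith only [h1, h2, h3]

  -- limsup stage
  obtain ⟨P, hPdef⟩ : ∃ t : ℝ, t = limsup p atTop := ⟨_, rfl⟩
  obtain ⟨Q, hQdef⟩ : ∃ t : ℝ, t = limsup q atTop := ⟨_, rfl⟩
  obtain ⟨R, hRdef⟩ : ∃ t : ℝ, t = limsup r atTop := ⟨_, rfl⟩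
  have hevp : EvLe p P := by rw [hPdef]; exact evle_limsup hpB
  have hevq : EvLe q Q := by rw [hQdef]; exact evle_limsup hqB
  have hevr : EvLe r R := by rw [hRdef]; exact evle_limsup hrB
  have hP0 : 0 ≤ P := by rw [hPdef]; exact limsup_nonneg' hp0 hpB
  have hQ0 : 0 ≤ Q := by rw [hQdef]; exact limsup_nonneg' hq0 hqB
  have hR0 : 0 ≤ R := by rw [hRdef]; exact limsup_nonneg' hr0 hrB
  have hzero : EvLe (fun _ : ℕ => (0:ℝ)) 0 := EvLe.of_le fun k => le_rfl
  -- fixed point inequality for p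
  have hP1 : P * γ ≤ α*β*Q := by
    have h := limsup_le_of_evle hp0
      (evrec2 (u := p) (v := q) (w := fun _ : ℕ => (0:ℝ)) (ρ := β) (c1 := α*β)
        (c2 := 0) (dd := 0) (M := BB/aa) (Qv := Q) (Qw := 0)
        hβ0 hβ1 (by positivity) le_rfl hpB hevq hzero
        (fun k => by simpa using hR1 k))
    rw [← hPdef] at h
    rw [le_div_iff₀ (show (0:ℝ) < 1 - β by linarith)] at h
    rw [hγdef]
    linarith
  -- fixed point inequality for r
  have hR1' : R * (α*μ) ≤ 2*(α*L*P) + 2*E1 := by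
    have hρ0' : (0:ℝ) ≤ 1 - α*μ/2 := by linarith
    have hρ1' : 1 - α*μ/2 < 1 := by linarith
    have h := limsup_le_of_evle hr0
      (evrec2 (u := r) (v := p) (w := fun _ : ℕ => (0:ℝ)) (ρ := 1 - α*μ/2)
        (c1 := α*L) (c2 := 0) (dd := E1) (M := BB) (Qv := P) (Qw := 0)
        hρ0' hρ1' (by positivity) le_rfl hrB hevp hzero
        (fun k => by simpa using hR2 k))
    rw [← hRdef] at h
    rw [show 1 - (1 - α*μ/2) = α*μ/2 by ring] at h
    rw [le_div_iff₀ (by positivity : (0:ℝ) < α*μ/2)] at h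
    simp only [mul_zero, zero_mul, add_zero] at h
    linarith
  -- fixed point inequality for q
  have hq2 : Q * γ ≤ 6*L*P + 4*L*R + 2*(L*E1 + E2) := by
    have hρ0' : (0:ℝ) ≤ β + α*L := by positivity
    have hρ1' : β + α*L < 1 := by
      have h' : α*L ≤ (1-β)/2 := by rw [← hγdef]; exact hαLγ
      linarith
    have h := limsup_le_of_evle hq0
      (evrec2 (u := q) (v := p) (w := r) (ρ := β + α*L) (c1 := 3*L) (c2 := 2*L)
        (dd := L*E1 + E2) (M := BB/bb) (Qv := P) (Qw := R)
        hρ0' hρ1' (by positivity) (by positivity)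
        hqB hevp hevr (fun k => hR3 k))
    rw [← hQdef] at h
    rw [show 1 - (β + α*L) = γ - α*L from by rw [hγdef]; ring] at h
    have hden : (0:ℝ) < γ - α*L := by linarith
    rw [le_div_iff₀ hden] at h
    have hmul := mul_nonneg hQ0 (show (0:ℝ) ≤ γ - 2*(α*L) by linarith)
    nlinarith only [h, hmul]
  -- polynomial bound on P
  have hαLL : α*L^2 ≤ γ^2*μ/768 := by linarith
  have hPb : P*(γ^2*μ) ≤ 16*β*L*E1 + 4*α*β*L*μ*E1 + 4*α*β*μ*E2 := by
    have t1 := mul_le_mul_of_nonneg_right hP1 (mul_nonneg hγ0.le hμ.le)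
    have t2 := mul_le_mul_of_nonneg_left hq2
      (by positivity : (0:ℝ) ≤ α*β*μ)
    have t3 := mul_le_mul_of_nonneg_left hR1'
      (by positivity : (0:ℝ) ≤ 4*β*L)
    have t5 : 6*(α*β*L*μ*P) ≤ 6*(α*β*L^2*P) := by
      have := mul_nonneg (sub_nonneg.mpr hμL)
        (by positivity : (0:ℝ) ≤ 6*(α*β*L*P))
      nlinarith only [this]
    have u1 := mul_le_mul_of_nonneg_right hkey (mul_nonneg hβ0 hP0)
    have u2 : γ^2*μ*(β*P) ≤ γ^2*μ*P := by
      have := mul_nonneg (sub_nonneg.mpr hβ1')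
        (by positivity : (0:ℝ) ≤ γ^2*μ*P)
      nlinarith only [this]
    nlinarith only [t1, t2, t3, t5, u1, u2,
      (by positivity : (0:ℝ) ≤ β*L*E1),
      (by positivity : (0:ℝ) ≤ α*β*L*μ*E1),
      (by positivity : (0:ℝ) ≤ α*β*μ*E2)]
  -- final polynomial inequality
  have hfinal : (P + R)*(α*μ^2*γ^2)
      ≤ μ*(4*γ^2*E1 + 40*α*β*L*E1 + 16*α^2*β*L*E2) := by
    have v1 := mul_le_mul_of_nonneg_left hR1'
      (by positivity : (0:ℝ) ≤ μ*γ^2)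
    have v2 := mul_le_mul_of_nonneg_left hPb (le_of_lt hαμ0)
    have v3 := mul_le_mul_of_nonneg_left hPb
      (by positivity : (0:ℝ) ≤ 2*(α*L))
    -- absorption bounds
    have w1a := mul_le_mul_of_nonneg_right hkey (mul_nonneg hβ0 hE10)
    have w1b : γ^2*μ*(β*E1) ≤ γ^2*μ*E1 := by
      have := mul_nonneg (sub_nonneg.mpr hβ1')
        (by positivity : (0:ℝ) ≤ γ^2*μ*E1)
      nlinarith only [this]
    have z1 : (α*μ)*(α*L) ≤ 1*(γ^2/768) :=
      mul_le_mul hαμ1 hαL (by positivity) (by norm_num)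
    have z2 := mul_le_mul_of_nonneg_left z1
      (by positivity : (0:ℝ) ≤ 4*β*μ*E1)
    have z2b : 4*β*μ*E1*(γ^2/768) ≤ γ^2*μ*E1 := by
      have h1 := mul_nonneg (sub_nonneg.mpr hβ1')
        (by positivity : (0:ℝ) ≤ γ^2*μ*E1)
      nlinarith only [h1, mul_nonneg (mul_nonneg hμ.le hE10) (sq_nonneg γ)]
    have z3 : (α*L^2)*(α*μ) ≤ (γ^2*μ/768)*1 :=
      mul_le_mul hαLL hαμ1 (le_of_lt hαμ0) (by positivity)
    have z4 := mul_le_mul_of_nonneg_left z3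
      (by positivity : (0:ℝ) ≤ 8*β*E1)
    have z4b : 8*β*E1*(γ^2*μ/768) ≤ γ^2*μ*E1 := by
      have h1 := mul_nonneg (sub_nonneg.mpr hβ1')
        (by positivity : (0:ℝ) ≤ γ^2*μ*E1)
      nlinarith only [h1, mul_nonneg (mul_nonneg hμ.le hE10) (sq_nonneg γ)]
    have w4 : 4*(α^2*β*μ^2*E2) ≤ 4*(α^2*β*L*μ*E2) := by
      have := mul_nonneg (sub_nonneg.mpr hμL)
        (by positivity : (0:ℝ) ≤ 4*(α^2*β*μ*E2))
      nlinarith only [this]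
    have w5 : 0 ≤ α*β*L*μ*E1 := by positivity
    nlinarith only [v1, v2, v3, w1a, w1b, z2, z2b, z4, z4b, w4, w5,
      (by positivity : (0:ℝ) ≤ γ^2*μ*E1),
      (by positivity : (0:ℝ) ≤ α*β*L*μ*E2),
      (by positivity : (0:ℝ) ≤ α^2*β*L*μ*E2),
      (by positivity : (0:ℝ) ≤ α*β*L*μ*E1),
      (by positivity : (0:ℝ) ≤ α^2*β*L*μ*E1)]
  -- convert to the stated form
  have h1βne : (1 - β) ≠ 0 := by
    intro hcon; rw [hγdef] at hγ0; rw [hcon] at hγ0; exact lt_irrefl 0 hγ0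
  have hPR : P + R ≤ 4*E1/(α*μ) + 40*β*L*E1/(γ^2*μ) + 16*α*β*L*E2/(γ^2*μ) := by
    have hXeq : (4*E1/(α*μ) + 40*β*L*E1/(γ^2*μ) + 16*α*β*L*E2/(γ^2*μ)) * (α*μ^2*γ^2)
        = μ*(4*γ^2*E1 + 40*α*β*L*E1 + 16*α^2*β*L*E2) := by
      have hγne : γ ≠ 0 := ne_of_gt hγ0
      have hμne : μ ≠ 0 := ne_of_gt hμ
      have hαne : α ≠ 0 := ne_of_gt hα0
      field_simp
    have hpos : (0:ℝ) < α*μ^2*γ^2 := by positivity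
    have h2 := hfinal
    rw [← hXeq] at h2
    exact le_of_mul_le_mul_right h2 hpos
  -- eventual bound on the goal function
  have hFle : ∀ k, (Real.sqrt n)⁻¹ * Real.sqrt (∑ i, ‖x k i - xstar k‖^2)
      ≤ sqn⁻¹ * (p k + r k) := by
    intro k
    rw [← hsqndef]
    apply mul_le_mul_of_nonneg_left _ (inv_nonneg.mpr hsqn0.le)
    have h := hsle k
    simp only [hsdef] at h
    exact h
  have hsinv1 : sqn⁻¹ ≤ 1 := by
    have h0 : sqn⁻¹ * sqn ≤ 1 * sqn := by
      rw [inv_mul_cancel₀ (ne_of_gt hsqn0)]; linarith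
    exact le_of_mul_le_mul_right h0 hsqn0
  have hEvF : EvLe (fun k => (Real.sqrt n)⁻¹ * Real.sqrt (∑ i, ‖x k i - xstar k‖^2))
      (sqn⁻¹*(P+R)) := by
    intro ε hε
    filter_upwards [hevp (ε/2) (by linarith), hevr (ε/2) (by linarith)] with k h1 h2
    have h3 := hFle k
    have h4 : sqn⁻¹ * (p k + r k) ≤ sqn⁻¹ * ((P + R) + ε) := by
      apply mul_le_mul_of_nonneg_left _ (inv_nonneg.mpr hsqn0.le)
      linarith
    have h6 : sqn⁻¹ * ε ≤ ε := by
      nlinarith only [hsinv1, hε.le, inv_nonneg.mpr hsqn0.le]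
    have h5 : sqn⁻¹ * ((P + R) + ε) ≤ sqn⁻¹*(P+R) + ε := by nlinarith only [h6]
    calc (fun k => (Real.sqrt ↑n)⁻¹ * Real.sqrt (∑ i, ‖x k i - xstar k‖^2)) k
        = (Real.sqrt ↑n)⁻¹ * Real.sqrt (∑ i, ‖x k i - xstar k‖^2) := rfl
      _ ≤ sqn⁻¹ * (p k + r k) := h3
      _ ≤ sqn⁻¹*(P+R) + ε := by linarith
  have hgoal1 : Filter.limsup
      (fun k => (Real.sqrt n)⁻¹ * Real.sqrt (∑ i, ‖x k i - xstar k‖^2))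
      Filter.atTop ≤ sqn⁻¹*(P+R) :=
    limsup_le_of_evle
      (fun k => mul_nonneg (inv_nonneg.mpr (Real.sqrt_nonneg _)) (Real.sqrt_nonneg _))
      hEvF
  have hsqRHS : sqn⁻¹*(P+R)
      ≤ (4 / (α * μ) + 40 * β * L / ((1 - β) ^ 2 * μ)) * Δx
        + 16 * α * β * L * Δg / ((1 - β) ^ 2 * μ) := by
    have hrhs_eq : ((4 / (α * μ) + 40 * β * L / ((1 - β) ^ 2 * μ)) * Δx
        + 16 * α * β * L * Δg / ((1 - β) ^ 2 * μ)) * sqn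
        = 4*E1/(α*μ) + 40*β*L*E1/(γ^2*μ) + 16*α*β*L*E2/(γ^2*μ) := by
      rw [hE1def, hE2def, hγdef]
      have hμne : μ ≠ 0 := ne_of_gt hμ
      have hαne : α ≠ 0 := ne_of_gt hα0
      field_simp
    have h1 : P + R ≤ ((4 / (α * μ) + 40 * β * L / ((1 - β) ^ 2 * μ)) * Δx
        + 16 * α * β * L * Δg / ((1 - β) ^ 2 * μ)) * sqn := by
      rw [hrhs_eq]; exact hPR
    calc sqn⁻¹*(P+R)
        ≤ sqn⁻¹*(((4 / (α * μ) + 40 * β * L / ((1 - β) ^ 2 * μ)) * Δx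
            + 16 * α * β * L * Δg / ((1 - β) ^ 2 * μ)) * sqn) :=
          mul_le_mul_of_nonneg_left h1 (inv_nonneg.mpr hsqn0.le)
      _ = (4 / (α * μ) + 40 * β * L / ((1 - β) ^ 2 * μ)) * Δx
            + 16 * α * β * L * Δg / ((1 - β) ^ 2 * μ) := by
          rw [mul_comm _ sqn, ← mul_assoc, inv_mul_cancel₀ (ne_of_gt hsqn0), one_mul]
  exact le_trans hgoal1 hsqRHS
end

section
/- For real numbers β ∈ (0,1), 0 < μ ≤ L and step-size α with 0 < α ≤ μ(1−β)/(10L²), the inequality (1 − αμ/2 − β)² + 4βα²L² ≤ (1 − αμ/4 − β)² holds. -/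
theorem diffusion_root_inequality
    (β μ L α : ℝ) (hβ0 : 0 < β) (hβ1 : β < 1) (hμ : 0 < μ) (hμL : μ ≤ L)
    (hα0 : 0 < α) (hα : α ≤ μ * (1 - β) / (10 * L ^ 2)) :
    (1 - α * μ / 2 - β) ^ 2 + 4 * β * α ^ 2 * L ^ 2 ≤ (1 - α * μ / 4 - β) ^ 2 := by
  have hL : 0 < L := lt_of_lt_of_le hμ hμL
  have hL2 : 0 < 10 * L ^ 2 := by positivity
  have h1 : α * (10 * L ^ 2) ≤ μ * (1 - β) := by
    calc α * (10 * L ^ 2) ≤ (μ * (1 - β) / (10 * L ^ 2)) * (10 * L ^ 2) := by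
          exact mul_le_mul_of_nonneg_right hα (le_of_lt hL2)
      _ = μ * (1 - β) := by field_simp
  have h2 : α * μ * (10 * L ^ 2) ≤ μ ^ 2 * (1 - β) := by nlinarith
  have h3 : μ ^ 2 ≤ L ^ 2 := by nlinarith
  have h4 : α * μ ≤ (1 - β) / 10 := by nlinarith
  nlinarith [mul_pos hα0 hμ, sq_nonneg (1 - β), mul_nonneg hα0.le hμ.le,
    mul_le_mul h1 hβ1.le hβ0.le (by nlinarith : (0:ℝ) ≤ μ * (1 - β))]
end

section
/- For real numbers β ∈ (0,1), 0 < μ ≤ L and step-size α with 0 < α ≤ (1−β)²μ/(768L²), define the cubic polynomial p(τ) = [(τ − (1+β)/2)(τ − β) − 5αβL]·(τ − (1 − αμ/2)) − 3α²βL². Then p(τ) ≥ 0 for every real τ ≥ 1 − αμ/4. -/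
theorem dgt_charpoly_nonneg
    (β μ L α : ℝ) (hβ0 : 0 < β) (hβ1 : β < 1) (hμ : 0 < μ) (hμL : μ ≤ L)
    (hα0 : 0 < α) (hα : α ≤ (1 - β) ^ 2 * μ / (768 * L ^ 2)) :
    ∀ τ : ℝ, 1 - α * μ / 4 ≤ τ →
      ((τ - (1 + β) / 2) * (τ - β) - 5 * α * β * L) * (τ - (1 - α * μ / 2))
        - 3 * α ^ 2 * β * L ^ 2 ≥ 0 := by
  intro τ hτ
  have hL : 0 < L := hμ.trans_le hμL
  have hkey : α * (768 * L ^ 2) ≤ (1 - β) ^ 2 * μ := (le_div_iff₀ (by positivity)).mp hα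
  have haL : α * L * 768 ≤ (1 - β) ^ 2 := by nlinarith [sq_nonneg (1 - β), hL]
  have haμ : α * μ * 768 ≤ (1 - β) ^ 2 := by nlinarith [mul_pos hα0 hL]
  have hβ2 : (1 - β) ^ 2 ≤ 1 - β := by nlinarith
  have hαμ1 : α * μ ≤ 1 - β := by nlinarith [mul_pos hα0 hμ]
  have hA : (1 - β) / 4 ≤ τ - (1 + β) / 2 := by nlinarith
  have hB : (1 - β) / 2 ≤ τ - β := by nlinarith
  have hC : α * μ / 4 ≤ τ - (1 - α * μ / 2) := by linarith
  have hAB : (1 - β) / 4 * ((1 - β) / 2) ≤ (τ - (1 + β) / 2) * (τ - β) :=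
    mul_le_mul hA hB (by linarith) (by linarith)
  have hD : 91 * (1 - β) ^ 2 / 768 ≤ (τ - (1 + β) / 2) * (τ - β) - 5 * α * β * L := by
    nlinarith [mul_pos hα0 hL, mul_pos (mul_pos hα0 hL) (sub_pos.mpr hβ1)]
  have hDpos : (0:ℝ) ≤ 91 * (1 - β) ^ 2 / 768 := by positivity
  have hprod : 91 * (1 - β) ^ 2 / 768 * (α * μ / 4) ≤
      ((τ - (1 + β) / 2) * (τ - β) - 5 * α * β * L) * (τ - (1 - α * μ / 2)) :=
    mul_le_mul hD hC (by positivity) (le_trans hDpos hD)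
  nlinarith [mul_le_mul_of_nonneg_left hkey (by positivity : (0:ℝ) ≤ α * β),
    mul_le_mul_of_nonneg_right hβ1.le
      (by positivity : (0:ℝ) ≤ α * (1 - β) ^ 2 * μ)]
end

section
/- For the DGT iterates: for every step-size α > 0 and every time k ∈ ℕ, (Σ_{i=1}^n ‖x_i^{k+1} − x_i^k‖²)^{1/2} ≤ (2 + αL)·(Σ_{i=1}^n ‖x_i^k − x̄^k‖²)^{1/2} + α·(Σ_{i=1}^n ‖y_i^k − ȳ^k‖²)^{1/2} + αL·√n·‖x̄^k − x̃^{k*}‖. -/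
open Finset Filter

section aux

variable {E : Type*} [NormedAddCommGroup E] [NormedSpace ℝ E]

/-- Doubly-stochastic averaging is nonexpansive in the Frobenius norm. -/
lemma dgt_ds_contraction {n : ℕ} (W : Fin n → Fin n → ℝ)
    (hWnonneg : ∀ i j, 0 ≤ W i j)
    (hWrow : ∀ i, ∑ j, W i j = 1) (hWcol : ∀ j, ∑ i, W i j = 1)
    (v : Fin n → E) :
    ∑ i, ‖∑ j, W i j • v j‖ ^ 2 ≤ ∑ j, ‖v j‖ ^ 2 := by
  have h1 : ∀ i, ‖∑ j, W i j • v j‖ ^ 2 ≤ ∑ j, W i j * ‖v j‖ ^ 2 := by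
    intro i
    have hle : ‖∑ j, W i j • v j‖ ≤ ∑ j, W i j * ‖v j‖ :=
      (norm_sum_le _ _).trans (le_of_eq (Finset.sum_congr rfl fun j _ => by
        rw [norm_smul, Real.norm_of_nonneg (hWnonneg i j)]))
    have hsq : ‖∑ j, W i j • v j‖ ^ 2 ≤ (∑ j, W i j * ‖v j‖) ^ 2 :=
      pow_le_pow_left₀ (norm_nonneg _) hle 2
    refine hsq.trans ?_
    have hcs := sum_mul_sq_le_sq_mul_sq Finset.univ
      (fun j => Real.sqrt (W i j)) (fun j => Real.sqrt (W i j) * ‖v j‖)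
    have e1 : ∀ j : Fin n, Real.sqrt (W i j) * (Real.sqrt (W i j) * ‖v j‖)
        = W i j * ‖v j‖ := by
      intro j
      rw [← mul_assoc, Real.mul_self_sqrt (hWnonneg i j)]
    have e2 : ∀ j : Fin n, Real.sqrt (W i j) ^ 2 = W i j := fun j =>
      Real.sq_sqrt (hWnonneg i j)
    have e3 : ∀ j : Fin n, (Real.sqrt (W i j) * ‖v j‖) ^ 2 = W i j * ‖v j‖ ^ 2 := by
      intro j
      rw [mul_pow, Real.sq_sqrt (hWnonneg i j)]
    simp only [e1, e2, e3] at hcs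
    calc (∑ j, W i j * ‖v j‖) ^ 2 ≤ (∑ j, W i j) * ∑ j, W i j * ‖v j‖ ^ 2 := hcs
      _ = ∑ j, W i j * ‖v j‖ ^ 2 := by rw [hWrow i, one_mul]
  calc ∑ i, ‖∑ j, W i j • v j‖ ^ 2 ≤ ∑ i, ∑ j, W i j * ‖v j‖ ^ 2 :=
        Finset.sum_le_sum fun i _ => h1 i
    _ = ∑ j, (∑ i, W i j) * ‖v j‖ ^ 2 := by
        rw [Finset.sum_comm]
        exact Finset.sum_congr rfl fun j _ => (Finset.sum_mul _ _ _).symm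
    _ = ∑ j, ‖v j‖ ^ 2 := by simp [hWcol]

lemma dgt_sqrt_sum_sq_le {n : ℕ} {v : Fin n → E} {c : ℝ}
    (hc : 0 ≤ c) (h : ∑ i, ‖v i‖ ^ 2 ≤ c ^ 2) :
    Real.sqrt (∑ i, ‖v i‖ ^ 2) ≤ c := by
  calc Real.sqrt (∑ i, ‖v i‖ ^ 2) ≤ Real.sqrt (c ^ 2) := Real.sqrt_le_sqrt h
    _ = c := Real.sqrt_sq hc

lemma dgt_sum_norm_le {n : ℕ} (v : Fin n → E) :
    ∑ i, ‖v i‖ ≤ Real.sqrt n * Real.sqrt (∑ i, ‖v i‖ ^ 2) := by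
  have hcs := sum_mul_sq_le_sq_mul_sq Finset.univ (fun _ : Fin n => (1 : ℝ))
    (fun i => ‖v i‖)
  simp only [one_mul, one_pow, Finset.sum_const, Finset.card_univ,
    Fintype.card_fin, nsmul_eq_mul, mul_one] at hcs
  have h0 : (0:ℝ) ≤ ∑ i, ‖v i‖ := Finset.sum_nonneg fun i _ => norm_nonneg _
  calc ∑ i, ‖v i‖ = Real.sqrt ((∑ i, ‖v i‖) ^ 2) := (Real.sqrt_sq h0).symm
    _ ≤ Real.sqrt ((n : ℝ) * ∑ i, ‖v i‖ ^ 2) := Real.sqrt_le_sqrt hcs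
    _ = Real.sqrt n * Real.sqrt (∑ i, ‖v i‖ ^ 2) := Real.sqrt_mul (Nat.cast_nonneg n) _

/-- Triangle inequality for the Frobenius (stacked ℓ²) norm, four terms. -/
lemma dgt_frob_triangle {n : ℕ} (a b c e : Fin n → E) :
    Real.sqrt (∑ i, ‖a i - b i - c i - e i‖ ^ 2) ≤
      Real.sqrt (∑ i, ‖a i‖ ^ 2) + Real.sqrt (∑ i, ‖b i‖ ^ 2)
      + Real.sqrt (∑ i, ‖c i‖ ^ 2) + Real.sqrt (∑ i, ‖e i‖ ^ 2) := by
  let A : PiLp 2 (fun _ : Fin n => E) := WithLp.toLp 2 a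
  let B : PiLp 2 (fun _ : Fin n => E) := WithLp.toLp 2 b
  let C : PiLp 2 (fun _ : Fin n => E) := WithLp.toLp 2 c
  let D : PiLp 2 (fun _ : Fin n => E) := WithLp.toLp 2 e
  have h : ‖A - B - C - D‖ ≤ ‖A‖ + ‖B‖ + ‖C‖ + ‖D‖ := by
    calc ‖A - B - C - D‖ ≤ ‖A - B - C‖ + ‖D‖ := norm_sub_le _ _
      _ ≤ ‖A - B‖ + ‖C‖ + ‖D‖ := by gcongr; exact norm_sub_le _ _
      _ ≤ ‖A‖ + ‖B‖ + ‖C‖ + ‖D‖ := by gcongr; exact norm_sub_le _ _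
  simpa only [PiLp.norm_eq_of_L2, A, B, C, D, WithLp.ofLp_sub, Pi.sub_apply,
    WithLp.ofLp_toLp] using h

end aux

theorem dgt_iterate_increment_bound
    (n d : ℕ) (hn : 1 ≤ n) (hd : 1 ≤ d)
    (L : ℝ) (hL : 0 < L)
    (f : ℕ → Fin n → EuclideanSpace ℝ (Fin d) → ℝ)
    (g : ℕ → Fin n → EuclideanSpace ℝ (Fin d) → EuclideanSpace ℝ (Fin d))
    (hgrad : ∀ k i x, HasGradientAt (f k i) (g k i x) x)
    (hsm : ∀ k i x y, ‖g k i x - g k i y‖ ≤ L * ‖x - y‖)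
    (xstar : ℕ → EuclideanSpace ℝ (Fin d))
    (hopt : ∀ k, ∑ i, g k i (xstar k) = 0)
    (W : Fin n → Fin n → ℝ)
    (hWnonneg : ∀ i j, 0 ≤ W i j)
    (hWrow : ∀ i, ∑ j, W i j = 1)
    (hWcol : ∀ j, ∑ i, W i j = 1)
    (α : ℝ) (hα0 : 0 < α)
    (x y : ℕ → Fin n → EuclideanSpace ℝ (Fin d))
    (hy0 : ∀ i, y 0 i = g 0 i (x 0 i))
    (hx : ∀ k i, x (k + 1) i = ∑ j, W i j • (x k j - α • y k j))
    (hy : ∀ k i, y (k + 1) i =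
      (∑ j, W i j • y k j) + g (k + 1) i (x (k + 1) i) - g k i (x k i))
    (xbar ybar : ℕ → EuclideanSpace ℝ (Fin d))
    (hxbar : ∀ k, xbar k = (n : ℝ)⁻¹ • ∑ i, x k i)
    (hybar : ∀ k, ybar k = (n : ℝ)⁻¹ • ∑ i, y k i)
    (k : ℕ) :
    Real.sqrt (∑ i, ‖x (k + 1) i - x k i‖ ^ 2) ≤
      (2 + α * L) * Real.sqrt (∑ i, ‖x k i - xbar k‖ ^ 2)
      + α * Real.sqrt (∑ i, ‖y k i - ybar k‖ ^ 2)
      + α * L * (Real.sqrt n * ‖xbar k - xstar k‖) := by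
  have hn0 : (0:ℝ) < n := by exact_mod_cast hn
  set S := Real.sqrt (∑ i, ‖x k i - xbar k‖ ^ 2) with hS
  set T := Real.sqrt (∑ i, ‖y k i - ybar k‖ ^ 2) with hT
  have hS0 : 0 ≤ S := Real.sqrt_nonneg _
  have hT0 : 0 ≤ T := Real.sqrt_nonneg _
  -- gradient tracking invariant
  have htrack : ∀ m, ∑ i, y m i = ∑ i, g m i (x m i) := by
    intro m
    induction m with
    | zero => exact Finset.sum_congr rfl fun i _ => hy0 i
    | succ m ih =>
      have hswap : ∑ i, ∑ j, W i j • y m j = ∑ j, y m j := by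
        rw [Finset.sum_comm]
        calc ∑ j, ∑ i, W i j • y m j = ∑ j, (∑ i, W i j) • y m j := by
              exact Finset.sum_congr rfl fun j _ => (Finset.sum_smul).symm
          _ = ∑ j, y m j := by simp [hWcol]
      calc ∑ i, y (m+1) i
          = ∑ i, ((∑ j, W i j • y m j) + g (m+1) i (x (m+1) i) - g m i (x m i)) :=
            Finset.sum_congr rfl fun i _ => hy m i
        _ = (∑ i, ∑ j, W i j • y m j) + ∑ i, g (m+1) i (x (m+1) i)
              - ∑ i, g m i (x m i) := by
            rw [Finset.sum_sub_distrib, Finset.sum_add_distrib]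
        _ = ∑ i, g (m+1) i (x (m+1) i) := by rw [hswap, ih]; abel
  -- bound on ybar
  have hybound : Real.sqrt n * ‖ybar k‖ ≤ L * S + L * (Real.sqrt n * ‖xbar k - xstar k‖) := by
    have hsum : ∑ i, y k i = ∑ i, (g k i (x k i) - g k i (xstar k)) := by
      rw [Finset.sum_sub_distrib, hopt k, sub_zero, htrack k]
    have hnorm : ‖∑ i, y k i‖ ≤ L * ∑ i, ‖x k i - xstar k‖ := by
      rw [hsum]
      calc ‖∑ i, (g k i (x k i) - g k i (xstar k))‖
          ≤ ∑ i, ‖g k i (x k i) - g k i (xstar k)‖ := norm_sum_le _ _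
        _ ≤ ∑ i, L * ‖x k i - xstar k‖ := Finset.sum_le_sum fun i _ => hsm k i _ _
        _ = L * ∑ i, ‖x k i - xstar k‖ := (Finset.mul_sum _ _ _).symm
    have hxi : ∑ i, ‖x k i - xstar k‖ ≤ Real.sqrt n * S + n * ‖xbar k - xstar k‖ := by
      calc ∑ i, ‖x k i - xstar k‖
          ≤ ∑ i, (‖x k i - xbar k‖ + ‖xbar k - xstar k‖) :=
            Finset.sum_le_sum fun i _ => by
              simpa using norm_sub_le_norm_sub_add_norm_sub (x k i) (xbar k) (xstar k)
        _ = (∑ i, ‖x k i - xbar k‖) + n * ‖xbar k - xstar k‖ := by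
            rw [Finset.sum_add_distrib]
            simp [Finset.sum_const, Finset.card_univ, mul_comm]
        _ ≤ Real.sqrt n * S + n * ‖xbar k - xstar k‖ := by
            gcongr
            exact dgt_sum_norm_le _
    have hyb : ‖ybar k‖ = (n : ℝ)⁻¹ * ‖∑ i, y k i‖ := by
      rw [hybar k, norm_smul, Real.norm_of_nonneg (by positivity)]
    have hr : Real.sqrt n * Real.sqrt n = n := Real.mul_self_sqrt (le_of_lt hn0)
    have hrpos : 0 < Real.sqrt n := Real.sqrt_pos.mpr hn0
    have key : Real.sqrt n * ‖ybar k‖ ≤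
        Real.sqrt n * ((n : ℝ)⁻¹ * (L * (Real.sqrt n * S + n * ‖xbar k - xstar k‖))) := by
      rw [hyb]
      gcongr
      exact hnorm.trans (by gcongr)
    refine key.trans (le_of_eq ?_)
    have hne : (n:ℝ) ≠ 0 := ne_of_gt hn0
    field_simp
    linear_combination S * hr
  -- decomposition of the increment
  have hdecomp : ∀ i, x (k+1) i - x k i =
      (∑ j, W i j • (x k j - xbar k)) - (x k i - xbar k)
      - α • (∑ j, W i j • (y k j - ybar k)) - α • ybar k := by
    intro i
    have hrowx : ∑ j, W i j • xbar k = xbar k := by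
      rw [← Finset.sum_smul, hWrow i, one_smul]
    have hrowy : ∑ j, W i j • ybar k = ybar k := by
      rw [← Finset.sum_smul, hWrow i, one_smul]
    rw [hx k i]
    simp only [smul_sub, Finset.sum_sub_distrib, hrowx, hrowy]
    have hay : ∑ j, W i j • α • y k j = α • ∑ j, W i j • y k j := by
      rw [Finset.smul_sum]
      exact Finset.sum_congr rfl fun j _ => smul_comm _ _ _
    rw [hay]
    abel
  -- main chain
  have hA : Real.sqrt (∑ i, ‖∑ j, W i j • (x k j - xbar k)‖ ^ 2) ≤ S := by
    apply dgt_sqrt_sum_sq_le hS0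
    rw [hS, Real.sq_sqrt (Finset.sum_nonneg fun i _ => sq_nonneg _)]
    exact dgt_ds_contraction W hWnonneg hWrow hWcol _
  have hC : Real.sqrt (∑ i, ‖α • ∑ j, W i j • (y k j - ybar k)‖ ^ 2) ≤ α * T := by
    apply dgt_sqrt_sum_sq_le (by positivity)
    have : ∀ i : Fin n, ‖α • ∑ j, W i j • (y k j - ybar k)‖ ^ 2
        = α ^ 2 * ‖∑ j, W i j • (y k j - ybar k)‖ ^ 2 := by
      intro i
      rw [norm_smul, Real.norm_of_nonneg (le_of_lt hα0), mul_pow]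
    rw [Finset.sum_congr rfl fun i _ => this i, ← Finset.mul_sum, mul_pow]
    have := dgt_ds_contraction W hWnonneg hWrow hWcol (fun j => y k j - ybar k)
    have hT2 : T ^ 2 = ∑ i, ‖y k i - ybar k‖ ^ 2 :=
      Real.sq_sqrt (Finset.sum_nonneg fun i _ => sq_nonneg _)
    rw [hT2]
    gcongr
  have hD : Real.sqrt (∑ _i : Fin n, ‖α • ybar k‖ ^ 2) = Real.sqrt n * (α * ‖ybar k‖) := by
    rw [Finset.sum_const, Finset.card_univ, Fintype.card_fin, nsmul_eq_mul,
      Real.sqrt_mul (Nat.cast_nonneg n), norm_smul,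
      Real.norm_of_nonneg (le_of_lt hα0),
      Real.sqrt_sq (by positivity)]
  have htri := dgt_frob_triangle (fun i => ∑ j, W i j • (x k j - xbar k))
    (fun i => x k i - xbar k)
    (fun i => α • ∑ j, W i j • (y k j - ybar k))
    (fun i => α • ybar k)
  have hlhs : Real.sqrt (∑ i, ‖x (k + 1) i - x k i‖ ^ 2) ≤
      S + S + α * T + Real.sqrt n * (α * ‖ybar k‖) := by
    calc Real.sqrt (∑ i, ‖x (k + 1) i - x k i‖ ^ 2)
        = Real.sqrt (∑ i, ‖(∑ j, W i j • (x k j - xbar k)) - (x k i - xbar k)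
            - α • (∑ j, W i j • (y k j - ybar k)) - α • ybar k‖ ^ 2) := by
          congr 1
          exact Finset.sum_congr rfl fun i _ => by rw [hdecomp i]
      _ ≤ _ + _ + _ + _ := htri
      _ ≤ S + S + α * T + Real.sqrt n * (α * ‖ybar k‖) := by
          rw [hD]
          gcongr
  have hfinal : Real.sqrt n * (α * ‖ybar k‖) ≤
      α * L * S + α * L * (Real.sqrt n * ‖xbar k - xstar k‖) := by
    have := mul_le_mul_of_nonneg_left hybound (le_of_lt hα0)
    calc Real.sqrt n * (α * ‖ybar k‖) = α * (Real.sqrt n * ‖ybar k‖) := by ring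
      _ ≤ α * (L * S + L * (Real.sqrt n * ‖xbar k - xstar k‖)) := this
      _ = α * L * S + α * L * (Real.sqrt n * ‖xbar k - xstar k‖) := by ring
  calc Real.sqrt (∑ i, ‖x (k + 1) i - x k i‖ ^ 2)
      ≤ S + S + α * T + Real.sqrt n * (α * ‖ybar k‖) := hlhs
    _ ≤ S + S + α * T + (α * L * S + α * L * (Real.sqrt n * ‖xbar k - xstar k‖)) := by
        gcongr
    _ = (2 + α * L) * S + α * T + α * L * (Real.sqrt n * ‖xbar k - xstar k‖) := by ring
end

section
/- Let A be the 2×2 real matrix A = [[1 − αμ/2, αL], [αβL, β]]. If 0 < α ≤ μ(1−β)/(10L²), then I − A is invertible and (I − A)^{-1} is bounded entrywise by the matrix [[4/(αμ), 4L/(μ(1−β))], [4βL/(μ(1−β)), 2/(1−β)]]; that is, every entry of (I − A)^{-1} is at most the corresponding entry of this matrix. -/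
theorem diffusion_matrix_inverse_bound
    (μ L β α : ℝ) (hμ : 0 < μ) (hμL : μ ≤ L) (hβ0 : 0 < β) (hβ1 : β < 1)
    (hα0 : 0 < α) (hα : α ≤ μ * (1 - β) / (10 * L ^ 2)) :
    IsUnit (1 - (!![1 - α * μ / 2, α * L; α * β * L, β] : Matrix (Fin 2) (Fin 2) ℝ)).det ∧
    ∀ i j, (1 - (!![1 - α * μ / 2, α * L; α * β * L, β] : Matrix (Fin 2) (Fin 2) ℝ))⁻¹ i j ≤
      (!![4 / (α * μ), 4 * L / (μ * (1 - β));
          4 * β * L / (μ * (1 - β)), 2 / (1 - β)] : Matrix (Fin 2) (Fin 2) ℝ) i j := by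
  have hL : 0 < L := lt_of_lt_of_le hμ hμL
  have hβ : 0 < 1 - β := by linarith
  have hM : (1 - (!![1 - α * μ / 2, α * L; α * β * L, β] : Matrix (Fin 2) (Fin 2) ℝ)) =
      !![α * μ / 2, -(α * L); -(α * β * L), 1 - β] := by
    ext i j
    fin_cases i <;> fin_cases j <;>
      simp [Matrix.one_apply, Matrix.sub_apply] <;> ring
  have hαL : α * (10 * L ^ 2) ≤ μ * (1 - β) := by
    rw [← le_div_iff₀ (by positivity)]; exact hα
  have hdet : (1 - (!![1 - α * μ / 2, α * L; α * β * L, β] : Matrix (Fin 2) (Fin 2) ℝ)).det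
      = α * μ / 2 * (1 - β) - α * L * (α * β * L) := by
    rw [hM, Matrix.det_fin_two_of]; ring
  have hdetge : α * μ / 2 * (1 - β) - α * L * (α * β * L) ≥ 2/5 * (α * μ * (1 - β)) := by
    nlinarith [mul_le_mul_of_nonneg_left hαL (le_of_lt (mul_pos hα0 hβ0)),
      mul_pos (mul_pos hα0 hβ0) (mul_pos hL hL),
      mul_pos hα0 (mul_pos hμ hβ), sq_nonneg L]
  set d := (1 - (!![1 - α * μ / 2, α * L; α * β * L, β] : Matrix (Fin 2) (Fin 2) ℝ)).det with hd
  have hdlb : 2/5 * (α * μ * (1 - β)) ≤ d := by rw [hdet]; linarith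
  have hdetpos : 0 < d := by
    have : 0 < α * μ * (1 - β) := by positivity
    linarith
  refine ⟨isUnit_iff_ne_zero.mpr (ne_of_gt hdetpos), ?_⟩
  intro i j
  have hinv : (1 - (!![1 - α * μ / 2, α * L; α * β * L, β] : Matrix (Fin 2) (Fin 2) ℝ))⁻¹
      = d⁻¹ • !![1 - β, α * L; α * β * L, α * μ / 2] := by
    rw [Matrix.inv_def, Ring.inverse_eq_inv, ← hd]
    congr 1
    rw [hM, Matrix.adjugate_fin_two_of]
    norm_num
  rw [hinv]
  have h1 : (0:ℝ) < α * μ := by positivity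
  have h2 : (0:ℝ) < μ * (1 - β) := by positivity
  fin_cases i <;> fin_cases j <;> simp [Matrix.smul_apply]
  · rw [inv_mul_eq_div, div_le_div_iff₀ hdetpos h1]
    nlinarith [hdlb, mul_pos h1 hβ]
  · rw [inv_mul_eq_div, div_le_div_iff₀ hdetpos h2]
    nlinarith [mul_le_mul_of_nonneg_left hdlb (by positivity : (0:ℝ) ≤ 4 * L),
      mul_pos (mul_pos hL hα0) (mul_pos hμ hβ)]
  · rw [inv_mul_eq_div, div_le_div_iff₀ hdetpos h2]
    nlinarith [mul_le_mul_of_nonneg_left hdlb (by positivity : (0:ℝ) ≤ 4 * β * L),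
      mul_pos (mul_pos (mul_pos hβ0 hL) hα0) (mul_pos hμ hβ)]
  · rw [inv_mul_eq_div, div_le_div_iff₀ hdetpos hβ]
    nlinarith [hdlb]
end

section
/- For real numbers β ∈ (0,1), L > 0 and step-size α with 0 < α ≤ 3(1−β)²/(80L), the quadratic p₀(τ) = (τ − (1+β)/2)(τ − β) − 5αβL satisfies p₀(τ) ≥ (τ − (β+3)/4)² for every real τ ≥ (β+3)/4; in particular, both (real) roots of p₀ are at most (β+3)/4. -/
theorem dgt_quadratic_root_bound
    (β L α : ℝ) (hβ0 : 0 < β) (hβ1 : β < 1) (hL : 0 < L)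
    (hα0 : 0 < α) (hα : α ≤ 3 * (1 - β) ^ 2 / (80 * L)) :
    (∀ τ : ℝ, (β + 3) / 4 ≤ τ →
      (τ - (1 + β) / 2) * (τ - β) - 5 * α * β * L ≥ (τ - (β + 3) / 4) ^ 2) ∧
    (∀ τ : ℝ, (τ - (1 + β) / 2) * (τ - β) - 5 * α * β * L = 0 → τ ≤ (β + 3) / 4) := by
  have hα' : α * (80 * L) ≤ 3 * (1 - β) ^ 2 := (le_div_iff₀ (by positivity)).mp hα
  have key : ∀ τ : ℝ, (β + 3) / 4 ≤ τ →
      (τ - (1 + β) / 2) * (τ - β) - 5 * α * β * L ≥ (τ - (β + 3) / 4) ^ 2 := by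
    intro τ hτ
    nlinarith [mul_pos hα0 hL, mul_le_mul_of_nonneg_left hα' (le_of_lt hβ0),
      mul_nonneg (sub_nonneg.mpr hβ1.le) (sub_nonneg.mpr hτ)]
  refine ⟨key, fun τ h => ?_⟩
  by_contra hgt
  push_neg at hgt
  have := key τ hgt.le
  nlinarith [sq_nonneg (τ - (β + 3) / 4)]
end
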